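/- arXiv:2301.13789 — 6 statements merged into one kernel-verified Lean document; each statement's English description precedes it below -/
import Mathlib

section
/- Let H be a graph on h vertices with chromatic number χ(H) = r ≥ 3, and suppose H has no critical edge, i.e., χ(H − e) = χ(H) for every edge e of H. There exist constants C, c, ε₀ > 0 (depending only on H) such that for every 0 < ε < ε₀ there are infinitely many positive integers n for which there exists an n-vertex graph G with minimum degree δ(G) ≥ ((r−2)/(r−1))·n such that: (i) G contains at most C·ε²·n^h labeled copies of H, and (ii) for every set D of at most c·ε·n² edges of G, the graph G − D still contains a copy of H. (This yields δ_lin-rem(H) ≥ (r−2)/(r−1) for H without a critical edge.) -/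
set_option linter.unusedSectionVars false

open SimpleGraph

/-- The number of labeled copies of `H` in `G`: injective graph homomorphisms `H → G`. -/
noncomputable def copyCount {V W : Type} [Fintype V] [Fintype W]
    (H : SimpleGraph V) (G : SimpleGraph W) : ℕ :=
  Nat.card {f : H →g G // Function.Injective f}

/-- The edge set of the copy of `H` given by the map `f`. -/
def copyEdges {V W : Type} (H : SimpleGraph V) (f : V → W) : Set (Sym2 W) :=
  Sym2.map f '' H.edgeSet

/-- `G` contains `m` pairwise edge-disjoint labeled copies of `H`. -/
def HasEdgeDisjointCopies {V W : Type} (H : SimpleGraph V) (G : SimpleGraph W) (m : ℕ) : Prop :=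
  ∃ f : Fin m → (H →g G),
    (∀ i, Function.Injective (f i)) ∧
    Pairwise fun i j => Disjoint (copyEdges H (f i)) (copyEdges H (f j))

/-- `G` contains a (labeled) copy of `H`. -/
def HasCopy {V W : Type} (H : SimpleGraph V) (G : SimpleGraph W) : Prop :=
  ∃ f : H →g G, Function.Injective f

open Finset Function

namespace Stmt6Aux

variable {h : ℕ} (H : SimpleGraph (Fin h)) (q k m : ℕ)

open Classical in
noncomputable def TT : Finset (ZMod k) :=
  Finset.image (fun t : (Fin h × Fin h) × ℕ =>
      (((t.1.1 : ℕ) : ZMod k) - ((t.1.2 : ℕ) : ZMod k)) * (t.2 : ZMod k))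
    ((Finset.univ.filter fun ij : Fin h × Fin h => H.Adj ij.1 ij.2) ×ˢ Finset.Icc 1 m)

def pt (v : Fin (q * k)) : ℕ := (v : ℕ) / k

def ps (v : Fin (q * k)) : ZMod k := ((v : ℕ) : ZMod k)

def Sadj (u v : Fin (q * k)) : Prop :=
  pt q k u = 0 ∧ pt q k v = 0 ∧ ps q k u - ps q k v ∈ TT H k m

noncomputable instance SadjDec : DecidableRel (Sadj H q k m) := fun u v => by
  unfold Sadj; infer_instance

lemma TT_neg {x : ZMod k} (hx : x ∈ TT H k m) : -x ∈ TT H k m := by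
  classical
  simp only [TT, Finset.mem_image, Finset.mem_product, Finset.mem_filter] at hx ⊢
  obtain ⟨⟨⟨i, j⟩, d⟩, ⟨⟨-, hadj⟩, hd⟩, rfl⟩ := hx
  exact ⟨⟨⟨j, i⟩, d⟩, ⟨⟨Finset.mem_univ _, hadj.symm⟩, hd⟩, by ring⟩

lemma Sadj_symm {u v : Fin (q * k)} (huv : Sadj H q k m u v) : Sadj H q k m v u := by
  obtain ⟨h1, h2, h3⟩ := huv
  refine ⟨h2, h1, ?_⟩
  have := TT_neg H k m h3
  simpa using this

noncomputable def Gr : SimpleGraph (Fin (q * k)) where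
  Adj u v := u ≠ v ∧ (pt q k u ≠ pt q k v ∨ Sadj H q k m u v)
  symm := ⟨by
    rintro u v ⟨huv, hor⟩
    exact ⟨huv.symm, hor.imp Ne.symm (Sadj_symm H q k m)⟩⟩
  loopless := ⟨fun v hv => hv.1 rfl⟩

lemma vertex_eq [NeZero k] {u v : Fin (q * k)} (h1 : pt q k u = pt q k v)
    (h2 : ps q k u = ps q k v) : u = v := by
  have hk : 0 < k := Nat.pos_of_ne_zero (NeZero.ne k)
  have h2' : (u : ℕ) % k = (v : ℕ) % k := by
    have := congrArg ZMod.val h2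
    simpa [ps, ZMod.val_natCast] using this
  apply Fin.ext
  calc (u : ℕ) = k * ((u:ℕ)/k) + (u:ℕ) % k := (Nat.div_add_mod _ _).symm
    _ = k * ((v:ℕ)/k) + (v:ℕ) % k := by rw [h2']; unfold pt at h1; rw [h1]
    _ = (v : ℕ) := Nat.div_add_mod _ _

section Copies

variable (p : Fin h → ℕ)

def φf (hp : ∀ i, p i < q) [NeZero k] (a : ZMod k) (d : ℕ) (i : Fin h) : Fin (q * k) :=
  ⟨p i * k + (a + (i : ℕ) * d : ZMod k).val, by
    have h1 : (a + (i : ℕ) * d : ZMod k).val < k := ZMod.val_lt _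
    have h2 : p i + 1 ≤ q := hp i
    calc p i * k + (a + (i : ℕ) * d : ZMod k).val < p i * k + k := by omega
      _ = (p i + 1) * k := by ring
      _ ≤ q * k := Nat.mul_le_mul_right _ h2⟩

variable {q k}

lemma pt_φf (hp : ∀ i, p i < q) [NeZero k] (a : ZMod k) (d : ℕ) (i : Fin h) :
    pt q k (φf q k p hp a d i) = p i := by
  have hk : 0 < k := Nat.pos_of_ne_zero (NeZero.ne k)
  have h1 : (a + (i : ℕ) * d : ZMod k).val < k := ZMod.val_lt _
  show (p i * k + (a + (i : ℕ) * d : ZMod k).val) / k = p i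
  rw [Nat.add_comm, Nat.add_mul_div_right _ _ hk, Nat.div_eq_of_lt h1, Nat.zero_add]

lemma ps_φf (hp : ∀ i, p i < q) [NeZero k] (a : ZMod k) (d : ℕ) (i : Fin h) :
    ps q k (φf q k p hp a d i) = a + (i : ℕ) * d := by
  show (((p i * k + (a + (i : ℕ) * d : ZMod k).val : ℕ)) : ZMod k) = _
  push_cast
  simp [ZMod.natCast_val, ZMod.cast_id, ZMod.natCast_self]

lemma cast_inj_of_lt [NeZero k] {i j : Fin h} (hhk : h ≤ k)
    (hij : ((i : ℕ) : ZMod k) = ((j : ℕ) : ZMod k)) : i = j := by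
  have h1 := congrArg ZMod.val hij
  rw [ZMod.val_cast_of_lt (lt_of_lt_of_le i.isLt hhk),
    ZMod.val_cast_of_lt (lt_of_lt_of_le j.isLt hhk)] at h1
  exact Fin.ext h1

lemma d_ne_zero [NeZero k] {d : ℕ} (hd1 : 1 ≤ d) (hdk : d < k) : ((d : ℕ) : ZMod k) ≠ 0 := by
  intro hc
  have := congrArg ZMod.val hc
  rw [ZMod.val_cast_of_lt hdk, ZMod.val_zero] at this
  omega

lemma φf_inj [Fact (Nat.Prime k)] (hp : ∀ i, p i < q) (hhk : h ≤ k) (a : ZMod k)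
    {d : ℕ} (hd1 : 1 ≤ d) (hdk : d < k) : Function.Injective (φf q k p hp a d) := by
  intro i j hij
  have hps := congrArg (ps q k) hij
  rw [ps_φf, ps_φf] at hps
  have h2 : (((i : ℕ) : ZMod k) - ((j : ℕ) : ZMod k)) * (d : ZMod k) = 0 := by
    have : ((i : ℕ) : ZMod k) * d = ((j : ℕ) : ZMod k) * d := by
      have := add_left_cancel hps; exact this
    ring_nf
    ring_nf at this
    rw [this]; ring
  rcases mul_eq_zero.mp h2 with hc | hc
  · exact cast_inj_of_lt hhk (by linear_combination hc)
  · exact absurd hc (d_ne_zero hd1 hdk)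

lemma φf_adj [Fact (Nat.Prime k)] (hp : ∀ i, p i < q)
    (hp2 : ∀ i j, H.Adj i j → p i ≠ p j ∨ (p i = 0 ∧ p j = 0))
    (hhk : h ≤ k) (a : ZMod k) {d : ℕ} (hd1 : 1 ≤ d) (hdm : d ≤ m) (hdk : d < k)
    {i j : Fin h} (hadj : H.Adj i j) :
    (Gr H q k m).Adj (φf q k p hp a d i) (φf q k p hp a d j) := by
  classical
  have hne : φf q k p hp a d i ≠ φf q k p hp a d j :=
    fun hc => hadj.ne (φf_inj p hp hhk a hd1 hdk hc)
  refine ⟨hne, ?_⟩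
  rcases hp2 i j hadj with hcase | ⟨hi0, hj0⟩
  · left; rw [pt_φf, pt_φf]; exact hcase
  · right
    refine ⟨by rw [pt_φf]; exact hi0, by rw [pt_φf]; exact hj0, ?_⟩
    rw [ps_φf, ps_φf]
    have : (a + (i:ℕ) * d) - (a + (j:ℕ) * d) = (((i:ℕ) : ZMod k) - ((j:ℕ) : ZMod k)) * (d : ZMod k) := by ring
    rw [this]
    simp only [TT, Finset.mem_image, Finset.mem_product, Finset.mem_filter]
    exact ⟨⟨⟨i, j⟩, d⟩, ⟨⟨Finset.mem_univ _, hadj⟩, Finset.mem_Icc.mpr ⟨hd1, hdm⟩⟩, rfl⟩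

lemma copies_sep [Fact (Nat.Prime k)] (hp : ∀ i, p i < q) (hhk : h ≤ k) (h2m : 2 * m < k)
    {a a' : ZMod k} {d d' : ℕ} (hd : d ∈ Finset.Icc 1 m) (hd' : d' ∈ Finset.Icc 1 m)
    {i j : Fin h} (hij : i ≠ j)
    (heq : s(φf q k p hp a d i, φf q k p hp a d j)
         = s(φf q k p hp a' d' i, φf q k p hp a' d' j)) : a = a' ∧ d = d' := by
  rw [Finset.mem_Icc] at hd hd'
  have hdk : d < k := by omega
  have hd'k : d' < k := by omega
  have hijz : ((i : ℕ) : ZMod k) - ((j : ℕ) : ZMod k) ≠ 0 := by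
    intro hc
    exact hij (cast_inj_of_lt hhk (by linear_combination hc))
  rcases Sym2.eq_iff.mp heq with ⟨h1, h2⟩ | ⟨h1, h2⟩
  · have e1 := congrArg (ps q k) h1
    have e2 := congrArg (ps q k) h2
    rw [ps_φf, ps_φf] at e1 e2
    have hdd : (((i : ℕ) : ZMod k) - ((j : ℕ) : ZMod k)) * ((d : ZMod k) - (d' : ZMod k)) = 0 := by
      linear_combination e1 - e2
    rcases mul_eq_zero.mp hdd with hc | hc
    · exact absurd hc hijz
    · have hdz : (d : ZMod k) = (d' : ZMod k) := by linear_combination hc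
      have : d = d' := by
        have := congrArg ZMod.val hdz
        rwa [ZMod.val_cast_of_lt hdk, ZMod.val_cast_of_lt hd'k] at this
      subst this
      refine ⟨?_, rfl⟩
      have : a + (i : ℕ) * d = a' + (i : ℕ) * d := e1
      linear_combination this
  · have e1 := congrArg (ps q k) h1
    have e2 := congrArg (ps q k) h2
    rw [ps_φf, ps_φf] at e1 e2
    have hdd : (((i : ℕ) : ZMod k) - ((j : ℕ) : ZMod k)) * ((d : ZMod k) + (d' : ZMod k)) = 0 := by
      linear_combination e1 - e2
    rcases mul_eq_zero.mp hdd with hc | hc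
    · exact absurd hc hijz
    · exfalso
      have hc2 : (((d + d' : ℕ)) : ZMod k) = 0 := by push_cast; linear_combination hc
      have := (ZMod.natCast_eq_zero_iff _ _).mp hc2
      have := Nat.le_of_dvd (by omega) this
      omega

end Copies

section GenCount

variable {β : Type} [Fintype β] [DecidableEq β]

lemma countTwoPairs (R : β → β → Prop) [DecidableRel R] (a b c d : Fin h)
    (hab : a ≠ b) (hac : a ≠ c) (had : a ≠ d) (hbc : b ≠ c) (hbd : b ≠ d) (hcd : c ≠ d) :
    (Finset.univ.filter fun f : Fin h → β => R (f a) (f b) ∧ R (f c) (f d)).card ≤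
      (Finset.univ.filter fun w : β × β => R w.1 w.2).card ^ 2 * (Fintype.card β) ^ (h - 4) := by
  classical
  set s : Finset (Fin h) := {a, b, c, d} with hs
  have hs4 : s.card = 4 := by
    rw [hs]
    rw [Finset.card_insert_of_notMem (by simp [hab, hac, had]),
      Finset.card_insert_of_notMem (by simp [hbc, hbd]),
      Finset.card_insert_of_notMem (by simp [hcd]), Finset.card_singleton]
  set W := Finset.univ.filter fun w : β × β => R w.1 w.2 with hW
  have key : (Finset.univ.filter fun f : Fin h → β => R (f a) (f b) ∧ R (f c) (f d)).card ≤
      ((W ×ˢ W) ×ˢ (Finset.univ : Finset ({x : Fin h // x ∉ s} → β))).card := by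
    apply Finset.card_le_card_of_injOn
      (fun f => (((f a, f b), (f c, f d)), fun x => f x.1))
    · intro f hf
      rw [Finset.mem_coe, Finset.mem_filter] at hf
      simp only [hW, Finset.mem_coe, Finset.mem_product, Finset.mem_filter, Finset.mem_univ, true_and, and_true]
      exact ⟨hf.2.1, hf.2.2⟩
    · intro f _ g _ heq
      funext x
      by_cases hx : x ∈ s
      · rw [hs] at hx
        simp only [Finset.mem_insert, Finset.mem_singleton] at hx
        rcases hx with rfl | rfl | rfl | rfl
        · exact congrArg (fun z => z.1.1.1) heq
        · exact congrArg (fun z => z.1.1.2) heq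
        · exact congrArg (fun z => z.1.2.1) heq
        · exact congrArg (fun z => z.1.2.2) heq
      · exact congrArg (fun z => z.2 ⟨x, hx⟩) heq
  calc _ ≤ _ := key
    _ = W.card ^ 2 * (Fintype.card β) ^ (h - 4) := by
      rw [Finset.card_product, Finset.card_product, Finset.card_univ, Fintype.card_fun,
        Fintype.card_subtype_compl, Fintype.card_coe, hs4, Fintype.card_fin]
      ring

lemma countCherry (R : β → β → Prop) [DecidableRel R] (a b c : Fin h)
    (hab : a ≠ b) (hac : a ≠ c) (hbc : b ≠ c) :
    (Finset.univ.filter fun f : Fin h → β => R (f a) (f b) ∧ R (f b) (f c)).card ≤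
      (Finset.univ.filter fun w : β × β × β => R w.1 w.2.1 ∧ R w.2.1 w.2.2).card *
        (Fintype.card β) ^ (h - 3) := by
  classical
  set s : Finset (Fin h) := {a, b, c} with hs
  have hs3 : s.card = 3 := by
    rw [hs]
    rw [Finset.card_insert_of_notMem (by simp [hab, hac]),
      Finset.card_insert_of_notMem (by simp [hbc]), Finset.card_singleton]
  set W := Finset.univ.filter fun w : β × β × β => R w.1 w.2.1 ∧ R w.2.1 w.2.2 with hW
  have key : (Finset.univ.filter fun f : Fin h → β => R (f a) (f b) ∧ R (f b) (f c)).card ≤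
      (W ×ˢ (Finset.univ : Finset ({x : Fin h // x ∉ s} → β))).card := by
    apply Finset.card_le_card_of_injOn (fun f => ((f a, f b, f c), fun x => f x.1))
    · intro f hf
      rw [Finset.mem_coe, Finset.mem_filter] at hf
      simp only [hW, Finset.mem_coe, Finset.mem_product, Finset.mem_filter, Finset.mem_univ, true_and, and_true]
      exact ⟨hf.2.1, hf.2.2⟩
    · intro f _ g _ heq
      funext x
      by_cases hx : x ∈ s
      · rw [hs] at hx
        simp only [Finset.mem_insert, Finset.mem_singleton] at hx
        rcases hx with rfl | rfl | rfl
        · exact congrArg (fun z => z.1.1) heq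
        · exact congrArg (fun z => z.1.2.1) heq
        · exact congrArg (fun z => z.1.2.2) heq
      · exact congrArg (fun z => z.2 ⟨x, hx⟩) heq
  calc _ ≤ _ := key
    _ = W.card * (Fintype.card β) ^ (h - 3) := by
      rw [Finset.card_product, Finset.card_univ, Fintype.card_fun,
        Fintype.card_subtype_compl, Fintype.card_coe, hs3, Fintype.card_fin]

lemma four_le_card (a b c d : Fin h)
    (hab : a ≠ b) (hac : a ≠ c) (had : a ≠ d) (hbc : b ≠ c) (hbd : b ≠ d) (hcd : c ≠ d) :
    4 ≤ h := by
  have h1 : ({a, b, c, d} : Finset (Fin h)).card = 4 := by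
    rw [Finset.card_insert_of_notMem (by simp [hab, hac, had]),
      Finset.card_insert_of_notMem (by simp [hbc, hbd]),
      Finset.card_insert_of_notMem (by simp [hcd]), Finset.card_singleton]
  calc 4 = ({a, b, c, d} : Finset (Fin h)).card := h1.symm
    _ ≤ Fintype.card (Fin h) := Finset.card_le_univ _
    _ = h := Fintype.card_fin h

end GenCount

section Cards

variable {h : ℕ} (H : SimpleGraph (Fin h)) (q k m : ℕ) [NeZero k]

lemma TT_card : (TT H k m).card ≤ h * h * m := by
  classical
  calc (TT H k m).card ≤ ((Finset.univ.filter fun ij : Fin h × Fin h => H.Adj ij.1 ij.2)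
        ×ˢ Finset.Icc 1 m).card := Finset.card_image_le
    _ ≤ ((Finset.univ : Finset (Fin h × Fin h)) ×ˢ Finset.Icc 1 m).card := by
        apply Finset.card_le_card
        exact Finset.product_subset_product (Finset.filter_subset _ _) subset_rfl
    _ = (h * h) * m := by
        rw [Finset.card_product, Finset.card_univ, Fintype.card_prod, Fintype.card_fin,
          Nat.card_Icc]
        simp
    _ = h * h * m := by ring

lemma pair_card :
    (Finset.univ.filter fun w : Fin (q*k) × Fin (q*k) => Sadj H q k m w.1 w.2).card ≤
      k * (TT H k m).card := by
  classical
  have key : (Finset.univ.filter fun w : Fin (q*k) × Fin (q*k) => Sadj H q k m w.1 w.2).card ≤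
      ((Finset.univ : Finset (ZMod k)) ×ˢ TT H k m).card := by
    apply Finset.card_le_card_of_injOn (fun w => (ps q k w.1, ps q k w.1 - ps q k w.2))
    · intro w hw
      rw [Finset.mem_coe, Finset.mem_filter] at hw
      simp only [Finset.mem_coe, Finset.mem_product, Finset.mem_univ, true_and]
      exact hw.2.2.2

    · intro w hw w' hw' heq
      rw [Finset.mem_coe, Finset.mem_filter] at hw hw'
      obtain ⟨-, p1, p2, -⟩ := hw
      obtain ⟨-, p1', p2', -⟩ := hw'
      have e1 : ps q k w.1 = ps q k w'.1 := congrArg Prod.fst heq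
      have e2 : ps q k w.2 = ps q k w'.2 := by
        have := congrArg Prod.snd heq
        simp only at this
        rw [e1] at this
        linear_combination -this
      have := vertex_eq q k (p1.trans p1'.symm) e1
      have := vertex_eq q k (p2.trans p2'.symm) e2
      exact Prod.ext ‹w.1 = w'.1› ‹w.2 = w'.2›
  exact key.trans_eq (by rw [Finset.card_product, Finset.card_univ, ZMod.card])

lemma cherry_card :
    (Finset.univ.filter fun w : Fin (q*k) × Fin (q*k) × Fin (q*k) =>
        Sadj H q k m w.1 w.2.1 ∧ Sadj H q k m w.2.1 w.2.2).card ≤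
      k * ((TT H k m).card * (TT H k m).card) := by
  classical
  have key : (Finset.univ.filter fun w : Fin (q*k) × Fin (q*k) × Fin (q*k) =>
      Sadj H q k m w.1 w.2.1 ∧ Sadj H q k m w.2.1 w.2.2).card ≤
      ((Finset.univ : Finset (ZMod k)) ×ˢ (TT H k m ×ˢ TT H k m)).card := by
    apply Finset.card_le_card_of_injOn
      (fun w : Fin (q*k) × Fin (q*k) × Fin (q*k) =>
        (ps q k w.2.1, (ps q k w.1 - ps q k w.2.1, ps q k w.2.1 - ps q k w.2.2)))
    · intro w hw
      rw [Finset.mem_coe, Finset.mem_filter] at hw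
      simp only [Finset.mem_coe, Finset.mem_product, Finset.mem_univ, true_and]
      exact ⟨hw.2.1.2.2, hw.2.2.2.2⟩
    · intro w hw w' hw' heq
      rw [Finset.mem_coe, Finset.mem_filter] at hw hw'
      obtain ⟨-, ⟨q1, q2, -⟩, q3, q4, -⟩ := hw
      obtain ⟨-, ⟨q1', q2', -⟩, q3', q4', -⟩ := hw'
      have e2 : ps q k w.2.1 = ps q k w'.2.1 := congrArg Prod.fst heq
      have e1 : ps q k w.1 = ps q k w'.1 := by
        have := congrArg (fun z : ZMod k × ZMod k × ZMod k => z.2.1) heq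
        simp only at this
        rw [e2] at this
        linear_combination this
      have e3 : ps q k w.2.2 = ps q k w'.2.2 := by
        have := congrArg (fun z : ZMod k × ZMod k × ZMod k => z.2.2) heq
        simp only at this
        rw [e2] at this
        linear_combination -this
      have r1 := vertex_eq q k (q1.trans q1'.symm) e1
      have r2 := vertex_eq q k (q2.trans q2'.symm) e2
      have r3 := vertex_eq q k (q4.trans q4'.symm) e3
      exact Prod.ext r1 (Prod.ext r2 r3)
  exact key.trans_eq (by
    rw [Finset.card_product, Finset.card_product, Finset.card_univ, ZMod.card])

lemma samepart_card (v : Fin (q*k)) :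
    (Finset.univ.filter fun u : Fin (q*k) => pt q k u = pt q k v).card ≤ k := by
  classical
  have key : (Finset.univ.filter fun u : Fin (q*k) => pt q k u = pt q k v).card ≤
      (Finset.univ : Finset (ZMod k)).card := by
    apply Finset.card_le_card_of_injOn (fun u => ps q k u)
    · intro u _; exact Finset.mem_univ _
    · intro u hu u' hu' heq
      rw [Finset.mem_coe, Finset.mem_filter] at hu hu'
      exact vertex_eq q k (hu.2.trans hu'.2.symm) heq
  exact key.trans_eq (by rw [Finset.card_univ, ZMod.card])

end Cards

section Main

variable {h : ℕ} (H : SimpleGraph (Fin h)) (q k m : ℕ)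

lemma hom_bad [NeZero k] {r : ℕ} (hr : 3 ≤ r) (hqr : q = r - 1)
    (hχ : H.chromaticNumber = (r : ℕ∞))
    (hnocrit : ∀ e ∈ H.edgeSet, (H.deleteEdges {e}).chromaticNumber = H.chromaticNumber)
    (f : H →g Gr H q k m) :
    ∃ i₁ j₁ i₂ j₂ : Fin h, H.Adj i₁ j₁ ∧ H.Adj i₂ j₂ ∧ s(i₁, j₁) ≠ s(i₂, j₂) ∧
      Sadj H q k m (f i₁) (f j₁) ∧ Sadj H q k m (f i₂) (f j₂) := by
  have hk : 0 < k := Nat.pos_of_ne_zero (NeZero.ne k)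
  have hq0 : 0 < q := by omega
  by_contra hbad
  push_neg at hbad
  have hptlt : ∀ i : Fin h, pt q k (f i) < q := by
    intro i
    exact Nat.div_lt_iff_lt_mul hk |>.mpr ((f i).isLt)
  by_cases hex : ∃ i₀ j₀ : Fin h, H.Adj i₀ j₀ ∧ Sadj H q k m (f i₀) (f j₀)
  · obtain ⟨i₀, j₀, hadj₀, hS₀⟩ := hex
    have hcol : (H.deleteEdges {s(i₀, j₀)}).Colorable q := by
      refine ⟨SimpleGraph.Coloring.mk (fun i => (⟨pt q k (f i), hptlt i⟩ : Fin q)) ?_⟩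
      intro a b hab
      rw [SimpleGraph.deleteEdges_adj] at hab
      obtain ⟨hab1, hab2⟩ := hab
      have hGadj := f.map_rel' hab1
      obtain ⟨-, hor⟩ := hGadj
      rcases hor with hpt | hS
      · intro hc
        exact hpt (congrArg Fin.val hc)
      · exact absurd hS₀ (hbad a b i₀ j₀ hab1 hadj₀ (by simpa using hab2) hS)
    have hle := hcol.chromaticNumber_le
    rw [hnocrit _ (H.mem_edgeSet.mpr hadj₀), hχ] at hle
    have : r ≤ q := by exact_mod_cast hle
    omega
  · push_neg at hex
    have hcol : H.Colorable q := by
      refine ⟨SimpleGraph.Coloring.mk (fun i => (⟨pt q k (f i), hptlt i⟩ : Fin q)) ?_⟩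
      intro a b hab
      have hGadj := f.map_rel' hab
      obtain ⟨-, hor⟩ := hGadj
      rcases hor with hpt | hS
      · intro hc
        exact hpt (congrArg Fin.val hc)
      · exact absurd hS (hex a b hab)
    have hle := hcol.chromaticNumber_le
    rw [hχ] at hle
    have : r ≤ q := by exact_mod_cast hle
    omega

lemma count_main [Fact (Nat.Prime k)] {r : ℕ} (hr : 3 ≤ r) (hqr : q = r - 1)
    (hχ : H.chromaticNumber = (r : ℕ∞))
    (hnocrit : ∀ e ∈ H.edgeSet, (H.deleteEdges {e}).chromaticNumber = H.chromaticNumber) :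
    _root_.copyCount H (Gr H q k m) ≤ h ^ 4 * (h ^ 4 * m ^ 2 * (k * (q * k) ^ (h - 3))) := by
  classical
  have hq0 : 0 < q := by omega
  set M := h ^ 4 * m ^ 2 * (k * (q * k) ^ (h - 3)) with hM
  set Bad : (Fin h → Fin (q * k)) → Prop := fun f =>
    ∃ i₁ j₁ i₂ j₂ : Fin h, H.Adj i₁ j₁ ∧ H.Adj i₂ j₂ ∧ s(i₁, j₁) ≠ s(i₂, j₂) ∧
      Sadj H q k m (f i₁) (f j₁) ∧ Sadj H q k m (f i₂) (f j₂) with hBad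
  set BF := Finset.univ.filter Bad with hBF
  have step1 : _root_.copyCount H (Gr H q k m) ≤ BF.card := by
    rw [_root_.copyCount]
    have hcard : Nat.card {g // g ∈ BF} = BF.card := by
      rw [Nat.card_eq_fintype_card, Fintype.card_coe]
    rw [← hcard]
    apply Nat.card_le_card_of_injective
      (fun F : {f : H →g Gr H q k m // Function.Injective f} =>
        (⟨(F.1 : Fin h → Fin (q * k)), by
          simp only [hBF, Finset.mem_filter, Finset.mem_univ, true_and]
          exact hom_bad H q k m hr hqr hχ hnocrit F.1⟩ : {g // g ∈ BF}))
    intro F F' hFF'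
    have h1 : (F.1 : Fin h → Fin (q * k)) = (F'.1 : Fin h → Fin (q * k)) :=
      congrArg Subtype.val hFF'
    exact Subtype.ext (DFunLike.coe_injective h1)
  set Q : Finset ((Fin h × Fin h) × Fin h × Fin h) :=
    Finset.univ.filter fun t => H.Adj t.1.1 t.1.2 ∧ H.Adj t.2.1 t.2.2 ∧
      s(t.1.1, t.1.2) ≠ s(t.2.1, t.2.2) with hQ
  have step2 : BF ⊆ Q.biUnion (fun t => Finset.univ.filter fun f : Fin h → Fin (q * k) =>
      Sadj H q k m (f t.1.1) (f t.1.2) ∧ Sadj H q k m (f t.2.1) (f t.2.2)) := by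
    intro f hf
    rw [hBF, Finset.mem_filter] at hf
    obtain ⟨-, i₁, j₁, i₂, j₂, b1, b2, b3, b4, b5⟩ := hf
    rw [Finset.mem_biUnion]
    refine ⟨((i₁, j₁), (i₂, j₂)), ?_, ?_⟩
    · rw [hQ, Finset.mem_filter]
      exact ⟨Finset.mem_univ _, b1, b2, b3⟩
    · rw [Finset.mem_filter]
      exact ⟨Finset.mem_univ _, b4, b5⟩
  have PB : (Finset.univ.filter fun w : Fin (q*k) × Fin (q*k) =>
      Sadj H q k m w.1 w.2).card ≤ k * (h * h * m) :=
    (pair_card H q k m).trans (Nat.mul_le_mul_left k (TT_card H k m))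
  have CB : (Finset.univ.filter fun w : Fin (q*k) × Fin (q*k) × Fin (q*k) =>
      Sadj H q k m w.1 w.2.1 ∧ Sadj H q k m w.2.1 w.2.2).card ≤
      k * ((h * h * m) * (h * h * m)) :=
    (cherry_card H q k m).trans
      (Nat.mul_le_mul_left k (Nat.mul_le_mul (TT_card H k m) (TT_card H k m)))
  have cherryM : k * ((h * h * m) * (h * h * m)) * (q * k) ^ (h - 3) = M := by
    rw [hM]; ring
  have tuple : ∀ t ∈ Q, (Finset.univ.filter fun f : Fin h → Fin (q * k) =>
      Sadj H q k m (f t.1.1) (f t.1.2) ∧ Sadj H q k m (f t.2.1) (f t.2.2)).card ≤ M := by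
    rintro ⟨⟨i₁, j₁⟩, i₂, j₂⟩ ht
    rw [hQ, Finset.mem_filter] at ht
    obtain ⟨-, a1, a2, hne⟩ := ht
    simp only at a1 a2 hne ⊢
    have h12 : i₁ ≠ j₁ := a1.ne
    have h34 : i₂ ≠ j₂ := a2.ne
    have cherry_case : ∀ (x v y : Fin h), x ≠ v → x ≠ y → v ≠ y →
        (∀ f : Fin h → Fin (q * k),
          (Sadj H q k m (f i₁) (f j₁) ∧ Sadj H q k m (f i₂) (f j₂)) →
          (Sadj H q k m (f x) (f v) ∧ Sadj H q k m (f v) (f y))) →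
        (Finset.univ.filter fun f : Fin h → Fin (q * k) =>
          Sadj H q k m (f i₁) (f j₁) ∧ Sadj H q k m (f i₂) (f j₂)).card ≤ M := by
      intro x v y hxv hxy hvy himp
      calc (Finset.univ.filter fun f : Fin h → Fin (q * k) =>
            Sadj H q k m (f i₁) (f j₁) ∧ Sadj H q k m (f i₂) (f j₂)).card
          ≤ (Finset.univ.filter fun f : Fin h → Fin (q * k) =>
            Sadj H q k m (f x) (f v) ∧ Sadj H q k m (f v) (f y)).card := by
            apply Finset.card_le_card
            apply Finset.monotone_filter_right
            intro f _ hf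
            exact himp f hf
        _ ≤ _ := countCherry (Sadj H q k m) x v y hxv hxy hvy
        _ ≤ k * ((h * h * m) * (h * h * m)) * (q * k) ^ (h - 3) := by
            rw [Fintype.card_fin]
            exact Nat.mul_le_mul_right _ CB
        _ = M := cherryM
    by_cases e1 : i₂ = i₁
    · subst e1
      have hj : j₁ ≠ j₂ := by
        intro hc; exact hne (by rw [hc])
      exact cherry_case j₁ i₂ j₂ (Ne.symm h12) hj h34
        (fun f ⟨hs1, hs2⟩ => ⟨Sadj_symm H q k m hs1, hs2⟩)
    · by_cases e2 : i₂ = j₁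
      · subst e2
        have hij : i₁ ≠ j₂ := by
          intro hc; exact hne (by rw [hc, Sym2.eq_swap])
        exact cherry_case i₁ i₂ j₂ h12 hij h34 (fun f hs => hs)
      · by_cases e3 : j₂ = i₁
        · subst e3
          exact cherry_case j₁ j₂ i₂ (Ne.symm h12) (fun hc => e2 hc.symm) (fun hc => e1 hc.symm)
            (fun f ⟨hs1, hs2⟩ => ⟨Sadj_symm H q k m hs1, Sadj_symm H q k m hs2⟩)
        · by_cases e4 : j₂ = j₁
          · subst e4
            exact cherry_case i₁ j₂ i₂ h12 (fun hc => e1 hc.symm) (fun hc => e2 hc.symm)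
              (fun f ⟨hs1, hs2⟩ => ⟨hs1, Sadj_symm H q k m hs2⟩)
          · -- four distinct
            have d1 : i₁ ≠ i₂ := fun hc => e1 hc.symm
            have d2 : i₁ ≠ j₂ := fun hc => e3 hc.symm
            have d3 : j₁ ≠ i₂ := fun hc => e2 hc.symm
            have d4 : j₁ ≠ j₂ := fun hc => e4 hc.symm
            have h4 : 4 ≤ h := four_le_card i₁ j₁ i₂ j₂ h12 d1 d2 d3 d4 h34
            calc (Finset.univ.filter fun f : Fin h → Fin (q * k) =>
                  Sadj H q k m (f i₁) (f j₁) ∧ Sadj H q k m (f i₂) (f j₂)).card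
                ≤ (Finset.univ.filter fun w : Fin (q*k) × Fin (q*k) =>
                    Sadj H q k m w.1 w.2).card ^ 2 * (Fintype.card (Fin (q*k))) ^ (h - 4) :=
                  countTwoPairs (Sadj H q k m) i₁ j₁ i₂ j₂ h12 d1 d2 d3 d4 h34
              _ ≤ (k * (h * h * m)) ^ 2 * (q * k) ^ (h - 4) := by
                  rw [Fintype.card_fin]
                  exact Nat.mul_le_mul_right _ (Nat.pow_le_pow_left PB 2)
              _ = (h ^ 4 * m ^ 2 * k) * (k * (q * k) ^ (h - 4)) := by ring
              _ ≤ (h ^ 4 * m ^ 2 * k) * ((q * k) * (q * k) ^ (h - 4)) := by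
                  apply Nat.mul_le_mul_left
                  apply Nat.mul_le_mul_right
                  exact Nat.le_mul_of_pos_left k hq0
              _ = M := by
                  rw [hM]
                  have he : h - 3 = (h - 4) + 1 := by omega
                  rw [he, pow_succ]
                  ring
  calc _root_.copyCount H (Gr H q k m) ≤ BF.card := step1
    _ ≤ (Q.biUnion _).card := Finset.card_le_card step2
    _ ≤ ∑ t ∈ Q, (Finset.univ.filter fun f : Fin h → Fin (q * k) =>
        Sadj H q k m (f t.1.1) (f t.1.2) ∧ Sadj H q k m (f t.2.1) (f t.2.2)).card :=
      Finset.card_biUnion_le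
    _ ≤ Q.card * M := by
        have := Finset.sum_le_card_nsmul Q _ M tuple
        simpa [smul_eq_mul] using this
    _ ≤ h ^ 4 * M := by
        apply Nat.mul_le_mul_right
        calc Q.card ≤ Fintype.card ((Fin h × Fin h) × Fin h × Fin h) := by
              rw [← Finset.card_univ]
              exact Finset.card_le_card (Finset.filter_subset _ _)
          _ = h ^ 4 := by
              simp [Fintype.card_prod, Fintype.card_fin]
              ring

lemma degree_bound [NeZero k] (v : Fin (q * k)) :
    q * k - k ≤ Nat.card ((Gr H q k m).neighborSet v) := by
  classical
  have key : (Finset.univ.filter fun u : Fin (q*k) => ¬ pt q k u = pt q k v).card ≤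
      Nat.card ((Gr H q k m).neighborSet v) := by
    rw [Nat.card_eq_fintype_card]
    rw [← Fintype.card_coe (Finset.univ.filter fun u : Fin (q*k) => ¬ pt q k u = pt q k v)]
    apply Fintype.card_le_of_injective (fun u =>
      (⟨u.1, by
        have hu := u.2
        rw [Finset.mem_filter] at hu
        rw [SimpleGraph.mem_neighborSet]
        refine ⟨?_, Or.inl (fun hc => hu.2 hc.symm)⟩
        intro hc
        exact hu.2 (congrArg (pt q k) hc).symm⟩ : ((Gr H q k m).neighborSet v)))
    intro u u' huu'
    have h2 := congrArg Subtype.val huu'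
    exact Subtype.ext h2
  have split := Finset.card_filter_add_card_filter_not
    (s := (Finset.univ : Finset (Fin (q*k)))) (p := fun u => pt q k u = pt q k v)
  rw [Finset.card_univ, Fintype.card_fin] at split
  have hsp := samepart_card q k v
  omega

lemma survival [Fact (Nat.Prime k)] (hh : 0 < h) (p : Fin h → ℕ) (hp : ∀ i, p i < q)
    (hp2 : ∀ i j, H.Adj i j → p i ≠ p j ∨ (p i = 0 ∧ p j = 0))
    (hhk : h ≤ k) (h2m : 2 * m < k)
    (D : Finset (Sym2 (Fin (q * k)))) (hD : D.card * (h * h) < k * m) :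
    HasCopy H ((Gr H q k m).deleteEdges ↑D) := by
  classical
  set P : Finset (ZMod k × ℕ) := (Finset.univ : Finset (ZMod k)) ×ˢ Finset.Icc 1 m with hP
  set K := P.filter (fun c => ∃ i j : Fin h, H.Adj i j ∧
    s(φf q k p hp c.1 c.2 i, φf q k p hp c.1 c.2 j) ∈ D) with hK
  have hwit : ∀ c ∈ K, ∃ w : Fin h × Fin h, H.Adj w.1 w.2 ∧
      s(φf q k p hp c.1 c.2 w.1, φf q k p hp c.1 c.2 w.2) ∈ D := by
    intro c hc
    rw [hK, Finset.mem_filter] at hc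
    obtain ⟨-, i, j, hij, hmem⟩ := hc
    exact ⟨(i, j), hij, hmem⟩
  haveI : Inhabited (Fin h × Fin h) := ⟨(⟨0, hh⟩, ⟨0, hh⟩)⟩
  choose! w hw1 hw2 using hwit
  have hKcard : K.card ≤ D.card * (h * h) := by
    have key : K.card ≤ (D ×ˢ (Finset.univ : Finset (Fin h × Fin h))).card := by
      apply Finset.card_le_card_of_injOn
        (fun c => (s(φf q k p hp c.1 c.2 (w c).1, φf q k p hp c.1 c.2 (w c).2), w c))
      · intro c hc
        rw [Finset.mem_coe, Finset.mem_product]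
        exact ⟨hw2 c hc, Finset.mem_univ _⟩
      · intro c hc c' hc' heq
        rw [Finset.mem_coe] at hc hc'
        have hww : w c = w c' := congrArg Prod.snd heq
        have he := congrArg Prod.fst heq
        simp only at he
        rw [hww] at he
        have hcP := Finset.mem_filter.mp (by rw [hK] at hc; exact hc) |>.1
        have hcP' := Finset.mem_filter.mp (by rw [hK] at hc'; exact hc') |>.1
        rw [hP, Finset.mem_product] at hcP hcP'
        have hd := hcP.2
        have hd' := hcP'.2
        have hadj := hw1 c hc
        rw [hww] at hadj
        have := copies_sep m p hp hhk h2m hd hd' hadj.ne he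
        exact Prod.ext this.1 this.2
    calc K.card ≤ _ := key
      _ = D.card * (h * h) := by
        rw [Finset.card_product, Finset.card_univ, Fintype.card_prod, Fintype.card_fin]
  have hPcard : P.card = k * m := by
    rw [hP, Finset.card_product, Finset.card_univ, ZMod.card, Nat.card_Icc]
    simp
  obtain ⟨c, hcP, hcK⟩ : ∃ c ∈ P, c ∉ K := by
    by_contra hall
    push_neg at hall
    have hsub : P ⊆ K := fun c hc => hall c hc
    have := Finset.card_le_card hsub
    omega
  rw [hP, Finset.mem_product, Finset.mem_Icc] at hcP
  obtain ⟨-, hd1, hdm⟩ := hcP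
  have hdk : c.2 < k := by omega
  refine ⟨⟨φf q k p hp c.1 c.2, ?_⟩, ?_⟩
  · intro i j hij
    rw [SimpleGraph.deleteEdges_adj]
    refine ⟨φf_adj H m p hp hp2 hhk c.1 hd1 hdm hdk hij, ?_⟩
    intro hmem
    apply hcK
    rw [hK, Finset.mem_filter]
    refine ⟨by rw [hP, Finset.mem_product, Finset.mem_Icc]; exact ⟨Finset.mem_univ _, hd1, hdm⟩, i, j, hij, by simpa using hmem⟩
  · exact φf_inj p hp hhk c.1 hd1 hdk

end Main

end Stmt6Aux
set_option maxHeartbeats 2000000 in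
theorem stmt_6 (h : ℕ) (H : SimpleGraph (Fin h)) (r : ℕ) (hr : 3 ≤ r)
    (hχ : H.chromaticNumber = (r : ℕ∞))
    (hnocrit : ∀ e ∈ H.edgeSet, (H.deleteEdges {e}).chromaticNumber = H.chromaticNumber) :
    ∃ C c ε₀ : ℝ, 0 < C ∧ 0 < c ∧ 0 < ε₀ ∧
      ∀ ε : ℝ, 0 < ε → ε < ε₀ → ∀ N : ℕ, ∃ n : ℕ, N ≤ n ∧ 0 < n ∧
        ∃ G : SimpleGraph (Fin n),
          (∀ v, (((r : ℝ) - 2) / ((r : ℝ) - 1)) * n ≤ (Nat.card (G.neighborSet v) : ℝ)) ∧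
          (_root_.copyCount H G : ℝ) ≤ C * ε ^ 2 * (n : ℝ) ^ h ∧
          ∀ D : Finset (Sym2 (Fin n)), ↑D ⊆ G.edgeSet → (D.card : ℝ) ≤ c * ε * n ^ 2 →
            HasCopy H (G.deleteEdges ↑D) := by
  classical
  open Stmt6Aux in
  -- r ≤ h
  have hrh : r ≤ h := by
    have hcol := H.colorable_of_fintype
    have hle := hcol.chromaticNumber_le
    rw [hχ, Fintype.card_fin] at hle
    exact_mod_cast hle
  have hh3 : 3 ≤ h := le_trans hr hrh
  have hhR : (0:ℝ) < h := by exact_mod_cast (by omega : 0 < h)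
  have hrR : (0:ℝ) < (r:ℝ) - 1 := by
    have : (3:ℝ) ≤ r := by exact_mod_cast hr
    linarith
  -- coloring
  have hcolr : H.Colorable r := SimpleGraph.chromaticNumber_le_iff_colorable.mp (le_of_eq hχ)
  obtain ⟨CC⟩ := hcolr
  set q := r - 1 with hq
  have hq_cast : (q:ℝ) = (r:ℝ) - 1 := by
    rw [hq, Nat.cast_sub (by omega : 1 ≤ r)]; norm_num
  set p : Fin h → ℕ := fun i => (CC i : ℕ) - 1 with hpdef
  have hp : ∀ i, p i < q := by
    intro i
    have := (CC i).isLt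
    simp only [hpdef]
    omega
  have hp2 : ∀ i j, H.Adj i j → p i ≠ p j ∨ (p i = 0 ∧ p j = 0) := by
    intro i j hij
    have hCC : CC i ≠ CC j := CC.valid hij
    have hne : (CC i : ℕ) ≠ (CC j : ℕ) := fun hc => hCC (Fin.ext hc)
    by_cases hcase : p i = p j
    · right
      simp only [hpdef] at hcase ⊢
      omega
    · left; exact hcase
  refine ⟨4 * (h:ℝ) ^ 8 + 1, 1 / (2 * (h:ℝ) ^ 2 * ((r:ℝ) - 1) ^ 2), 1/8,
    by positivity, by positivity, by norm_num, ?_⟩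
  intro ε hε hε8 N
  obtain ⟨k, hkB, hkprime⟩ := Nat.exists_infinite_primes (max (max N h) (max 3 (⌈1/ε⌉₊ + 1)))
  haveI : Fact (Nat.Prime k) := ⟨hkprime⟩
  haveI : NeZero k := ⟨hkprime.ne_zero⟩
  have hkN : N ≤ k := le_trans (le_trans (le_max_left _ _) (le_max_left _ _)) hkB
  have hkh : h ≤ k := le_trans (le_trans (le_max_right _ _) (le_max_left _ _)) hkB
  have hk3 : 3 ≤ k := le_trans (le_trans (le_max_left _ _) (le_max_right _ _)) hkB
  have hkc : ⌈1/ε⌉₊ + 1 ≤ k := le_trans (le_trans (le_max_right _ _) (le_max_right _ _)) hkB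
  have hkR : (3:ℝ) ≤ k := by exact_mod_cast hk3
  have hεk1 : 1 ≤ ε * k := by
    have h1 : (1/ε : ℝ) ≤ ⌈1/ε⌉₊ := Nat.le_ceil _
    have h2 : ((⌈1/ε⌉₊ : ℕ) : ℝ) ≤ k := by exact_mod_cast (by omega : ⌈1/ε⌉₊ ≤ k)
    have h3 : (1/ε : ℝ) ≤ k := le_trans h1 h2
    rw [div_le_iff₀ hε] at h3
    linarith [mul_comm ε (k:ℝ)]
  set m := ⌈ε * k⌉₊ with hm
  have hm1 : 1 ≤ m := Nat.one_le_iff_ne_zero.mpr (by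
    simp only [hm, ne_eq, Nat.ceil_eq_zero, not_le]
    positivity)
  have hmlow : ε * k ≤ (m:ℝ) := Nat.le_ceil _
  have hmup : (m:ℝ) < ε * k + 1 := Nat.ceil_lt_add_one (by positivity)
  have hmup2 : (m:ℝ) ≤ 2 * (ε * k) := by linarith
  have h2m : 2 * m < k := by
    have : (2 * m : ℝ) < k := by
      have : 2 * ((m:ℝ)) < 2 * (ε * k) + 2 := by linarith
      nlinarith
    exact_mod_cast this
  have hq2 : 2 ≤ q := by omega
  have hn0 : 0 < q * k := by positivity
  have hnN : N ≤ q * k := le_trans hkN (Nat.le_mul_of_pos_left k (by omega))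
  have hncast : ((q * k : ℕ) : ℝ) = (q:ℝ) * k := by push_cast; ring
  refine ⟨q * k, hnN, hn0, Gr H q k m, ?_, ?_, ?_⟩
  · -- min degree
    intro v
    have hd := degree_bound H q k m v
    have hd2 : ((q * k - k : ℕ) : ℝ) ≤ (Nat.card ((Gr H q k m).neighborSet v) : ℝ) :=
      Nat.cast_le.mpr hd
    refine le_trans (le_of_eq ?_) hd2
    have hsub : q * k - k = (q - 1) * k := (Nat.sub_one_mul q k).symm
    have hcast2 : ((q * k - k : ℕ) : ℝ) = ((r:ℝ) - 2) * k := by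
      rw [hsub]
      push_cast [Nat.cast_sub (by omega : 1 ≤ q)]
      rw [hq_cast]
      ring
    rw [hcast2, hncast, hq_cast]
    field_simp
  · -- copy count
    have hcm := count_main H q k m hr hq hχ hnocrit
    have c1 : (_root_.copyCount H (Gr H q k m) : ℝ) ≤
        (h:ℝ)^8 * (m:ℝ)^2 * (k:ℝ) * ((q:ℝ) * k)^(h-3) := by
      have := (Nat.cast_le (α := ℝ)).mpr hcm
      push_cast at this
      calc (_root_.copyCount H (Gr H q k m) : ℝ)
          ≤ (h:ℝ)^4 * ((h:ℝ)^4 * (m:ℝ)^2 * ((k:ℝ) * ((q:ℝ) * k)^(h-3))) := this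
        _ = (h:ℝ)^8 * (m:ℝ)^2 * (k:ℝ) * ((q:ℝ) * k)^(h-3) := by ring
    have hqR : (1:ℝ) ≤ q := by
      have : (2:ℝ) ≤ q := by exact_mod_cast hq2
      linarith
    have hkpos : (0:ℝ) < k := by linarith
    calc (_root_.copyCount H (Gr H q k m) : ℝ)
        ≤ (h:ℝ)^8 * (m:ℝ)^2 * (k:ℝ) * ((q:ℝ) * k)^(h-3) := c1
      _ ≤ (h:ℝ)^8 * (2 * (ε * k))^2 * (k:ℝ) * ((q:ℝ) * k)^(h-3) := by
          gcongr
      _ = 4 * (h:ℝ)^8 * ε^2 * ((k:ℝ)^3 * ((q:ℝ) * k)^(h-3)) := by ring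
      _ ≤ 4 * (h:ℝ)^8 * ε^2 * (((q:ℝ) * k)^3 * ((q:ℝ) * k)^(h-3)) := by
          gcongr
          nlinarith
      _ = 4 * (h:ℝ)^8 * ε^2 * ((q:ℝ) * k)^(3 + (h-3)) := by rw [pow_add]
      _ = 4 * (h:ℝ)^8 * ε^2 * ((q:ℝ) * k)^h := by
          congr 2
          omega
      _ ≤ (4 * (h:ℝ)^8 + 1) * ε^2 * (((q * k : ℕ)):ℝ)^h := by
          rw [hncast]
          have h0 : (0:ℝ) ≤ ε^2 * ((q:ℝ) * k)^h := by positivity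
          nlinarith
  · -- survival
    intro D hDsub hDcard
    apply survival H q k m (by omega : 0 < h) p hp hp2 hkh h2m D
    have hkm : ε * k * k ≤ (k:ℝ) * m := by
      have : ε * k ≤ (m:ℝ) := hmlow
      nlinarith
    have hDre : (D.card : ℝ) * (h*h) ≤ ε * k * k / 2 := by
      rw [hncast, hq_cast] at hDcard
      have hexp : 1 / (2 * (h:ℝ) ^ 2 * ((r:ℝ) - 1) ^ 2) * ε * (((r:ℝ) - 1) * k) ^ 2
          = ε * k * k / (2 * (h:ℝ)^2) := by
        field_simp
      rw [hexp] at hDcard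
      have hh2 : (0:ℝ) < (h:ℝ)^2 := by positivity
      calc (D.card : ℝ) * (h*h) ≤ (ε * k * k / (2 * (h:ℝ)^2)) * (h*h) := by
            have hhh : (0:ℝ) ≤ (h:ℝ)*(h:ℝ) := by positivity
            nlinarith
        _ = ε * k * k / 2 := by
            field_simp
    have : (D.card * (h * h) : ℝ) < (k : ℝ) * m := by
      push_cast
      nlinarith
    exact_mod_cast this
end

section
/- Let H be a graph on h vertices with chromatic number χ(H) = r ≥ 3, and let γ be a real number with (r−2)/(r−1) < γ ≤ 1. Then there exists μ > 0 such that for every ε > 0 and every positive integer n, every n-vertex graph G with minimum degree δ(G) ≥ γn that contains at least εn² pairwise edge-disjoint copies of H contains at least μ·ε·n^h labeled copies of H. (This is the upper bound δ_lin-rem(H) ≤ (r−2)/(r−1).) -/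
open Finset

open scoped Classical in
noncomputable def homsF {n r k : ℕ} (G : SimpleGraph (Fin n)) (c : Fin k → Fin r) :
    Finset (Fin k → Fin n) :=
  univ.filter fun f => ∀ u v, c u ≠ c v → G.Adj (f u) (f v)

open scoped Classical in
noncomputable def candF {n r k : ℕ} (G : SimpleGraph (Fin n)) (c : Fin (k+1) → Fin r)
    (g : Fin k → Fin n) : Finset (Fin n) :=
  univ.filter fun x => ∀ u : Fin k, c u.succ ≠ c 0 → G.Adj (g u) x

lemma mem_homsF {n r k : ℕ} {G : SimpleGraph (Fin n)} {c : Fin k → Fin r} {f : Fin k → Fin n} :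
    f ∈ homsF G c ↔ ∀ u v, c u ≠ c v → G.Adj (f u) (f v) := by
  classical simp [homsF]

lemma mem_candF {n r k : ℕ} {G : SimpleGraph (Fin n)} {c : Fin (k+1) → Fin r}
    {g : Fin k → Fin n} {x : Fin n} :
    x ∈ candF G c g ↔ ∀ u : Fin k, c u.succ ≠ c 0 → G.Adj (g u) x := by
  classical simp [candF]

lemma cons_mem_homsF {n r k : ℕ} {G : SimpleGraph (Fin n)} {c : Fin (k+1) → Fin r}
    (x : Fin n) (g : Fin k → Fin n) :
    Fin.cons x g ∈ homsF G c ↔ g ∈ homsF G (c ∘ Fin.succ) ∧ x ∈ candF G c g := by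
  rw [mem_homsF, mem_homsF, mem_candF]
  constructor
  · intro hf
    refine ⟨fun u v huv => ?_, fun u hu => ?_⟩
    · have := hf u.succ v.succ huv
      simpa using this
    · have := hf u.succ 0 hu
      simpa using this
  · rintro ⟨hg, hx⟩ u v huv
    induction u using Fin.cases with
    | zero =>
      induction v using Fin.cases with
      | zero => exact absurd rfl huv
      | succ v =>
        have := hx v (Ne.symm huv)
        simpa using this.symm
    | succ u =>
      induction v using Fin.cases with
      | zero => simpa using hx u huv
      | succ v => simpa using hg u v huv

lemma tail_mem_homsF {n r k : ℕ} {G : SimpleGraph (Fin n)} {c : Fin (k+1) → Fin r}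
    {f : Fin (k+1) → Fin n} (hf : f ∈ homsF G c) :
    Fin.tail f ∈ homsF G (c ∘ Fin.succ) := by
  have : Fin.cons (f 0) (Fin.tail f) ∈ homsF G c := by rwa [Fin.cons_self_tail]
  exact ((cons_mem_homsF _ _).mp this).1

open scoped Classical in
lemma fiber_card {n r k : ℕ} (G : SimpleGraph (Fin n)) (c : Fin (k+1) → Fin r)
    (g : Fin k → Fin n) (hg : g ∈ homsF G (c ∘ Fin.succ)) :
    ((homsF G c).filter (fun f => Fin.tail f = g)).card = (candF G c g).card := by
  refine Finset.card_bij' (fun f _ => f 0) (fun x _ => Fin.cons x g) ?_ ?_ ?_ ?_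
  · intro f hf
    simp only [mem_filter] at hf
    obtain ⟨hf1, hf2⟩ := hf
    have : Fin.cons (f 0) (Fin.tail f) ∈ homsF G c := by rwa [Fin.cons_self_tail]
    rw [cons_mem_homsF] at this
    rw [hf2] at this
    exact this.2
  · intro x hx
    simp only [mem_filter]
    refine ⟨(cons_mem_homsF x g).mpr ⟨hg, hx⟩, ?_⟩
    simp [Fin.tail_cons]
  · intro f hf
    simp only [mem_filter] at hf
    show Fin.cons (f 0) g = f
    rw [← hf.2, Fin.cons_self_tail]
  · intro x hx
    simp

open scoped Classical in
lemma peel {n r k : ℕ} (G : SimpleGraph (Fin n)) (c : Fin (k+1) → Fin r) :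
    (homsF G c).card = ∑ g ∈ homsF G (c ∘ Fin.succ), (candF G c g).card := by
  rw [Finset.card_eq_sum_card_fiberwise (f := Fin.tail)
    (t := homsF G (c ∘ Fin.succ)) (fun f hf => tail_mem_homsF hf)]
  exact Finset.sum_congr rfl fun g hg => fiber_card G c g hg

lemma homsF_comp_perm_card {n r k : ℕ} (G : SimpleGraph (Fin n)) (c : Fin k → Fin r)
    (σ : Equiv.Perm (Fin k)) :
    (homsF G (c ∘ σ)).card = (homsF G c).card := by
  refine Finset.card_bij' (fun f _ => f ∘ σ.symm) (fun f _ => f ∘ σ) ?_ ?_ ?_ ?_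
  · intro f hf
    rw [mem_homsF] at hf ⊢
    intro u v huv
    have := hf (σ.symm u) (σ.symm v) (by simpa using huv)
    simpa using this
  · intro f hf
    rw [mem_homsF] at hf ⊢
    intro u v huv
    exact hf (σ u) (σ v) (by simpa using huv)
  · intro f _; funext x; simp
  · intro f _; funext x; simp

open scoped Classical in
lemma card_nonadj {n : ℕ} (G : SimpleGraph (Fin n)) (w : Fin n) :
    (univ.filter fun x => ¬ G.Adj w x).card = n - G.degree w := by
  have h : (univ.filter fun x => ¬ G.Adj w x) = (G.neighborFinset w)ᶜ := by
    ext x; simp [SimpleGraph.mem_neighborFinset]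
  rw [h, Finset.card_compl, SimpleGraph.card_neighborFinset_eq_degree]
  simp

open scoped Classical in
lemma candF_card_lb {n r k : ℕ} (G : SimpleGraph (Fin n)) (c : Fin (k+1) → Fin r)
    (g : Fin k → Fin n) {γ η : ℝ} (hdeg : ∀ v, γ * n ≤ (G.degree v : ℝ))
    (hγ : γ = ((r:ℝ) - 2) / ((r:ℝ) - 1) + η) (hγle : γ ≤ 1) (hη : 0 < η) (hη1 : η ≤ 1)
    (hr : 3 ≤ r) (hk : k + 1 ≤ r) :
    η * n ≤ ((candF G c g).card : ℝ) := by
  set T : Finset (Fin k) := univ.filter (fun u => c u.succ ≠ c 0) with hT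
  have hsub : univ \ candF G c g ⊆ T.biUnion (fun u => univ.filter fun x => ¬ G.Adj (g u) x) := by
    intro x hx
    simp only [mem_sdiff, mem_univ, true_and, candF, mem_filter, not_forall] at hx
    obtain ⟨u, hu, hnadj⟩ := hx
    simp only [mem_biUnion, hT, mem_filter, mem_univ, true_and]
    exact ⟨u, hu, hnadj⟩
  have hdegn : ∀ w, G.degree w ≤ n := by
    intro w
    simpa using Finset.card_le_card (Finset.subset_univ (G.neighborFinset w))
  have h1 : (n : ℝ) - ((candF G c g).card : ℝ) ≤ (T.card : ℝ) * ((1 - γ) * n) := by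
    have hcard : (univ \ candF G c g).card = n - (candF G c g).card := by
      rw [Finset.card_sdiff_of_subset (Finset.subset_univ _)]
      simp
    have h2 : ((univ \ candF G c g).card : ℝ) ≤ ∑ u ∈ T, ((n : ℝ) - (G.degree (g u) : ℝ)) := by
      calc ((univ \ candF G c g).card : ℝ)
          ≤ ((T.biUnion (fun u => univ.filter fun x => ¬ G.Adj (g u) x)).card : ℝ) := by
            exact_mod_cast Finset.card_le_card hsub
        _ ≤ ((∑ u ∈ T, (univ.filter fun x => ¬ G.Adj (g u) x).card : ℕ) : ℝ) := by
            exact_mod_cast Finset.card_biUnion_le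
        _ = ∑ u ∈ T, ((n : ℝ) - (G.degree (g u) : ℝ)) := by
            push_cast [card_nonadj, Nat.cast_sub (hdegn _)]
            rfl
    have h3 : ∑ u ∈ T, ((n : ℝ) - (G.degree (g u) : ℝ)) ≤ (T.card : ℝ) * ((1 - γ) * n) := by
      have hb : ∀ u ∈ T, (n : ℝ) - (G.degree (g u) : ℝ) ≤ (1 - γ) * n := by
        intro u _
        have := hdeg (g u)
        nlinarith
      calc ∑ u ∈ T, ((n : ℝ) - (G.degree (g u) : ℝ)) ≤ ∑ _u ∈ T, (1 - γ) * (n:ℝ) :=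
            Finset.sum_le_sum hb
        _ = (T.card : ℝ) * ((1 - γ) * n) := by rw [Finset.sum_const, nsmul_eq_mul]
    have h4 : (n : ℝ) - ((candF G c g).card : ℝ) ≤ ((univ \ candF G c g).card : ℝ) := by
      rw [hcard]
      have : (candF G c g).card ≤ n := by
        simpa using Finset.card_le_card (Finset.subset_univ (candF G c g))
      push_cast [Nat.cast_sub this]
      linarith
    calc (n : ℝ) - ((candF G c g).card : ℝ) ≤ ((univ \ candF G c g).card : ℝ) := h4
      _ ≤ _ := le_trans h2 h3
  have hTk : (T.card : ℝ) ≤ (k : ℝ) := by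
    have : T.card ≤ k := by
      rw [hT]
      simpa using Finset.card_filter_le (univ : Finset (Fin k)) (fun u => c u.succ ≠ c 0)
    exact_mod_cast this
  have hRpos : (2:ℝ) ≤ (r:ℝ) - 1 := by
    have : (3:ℝ) ≤ (r:ℝ) := by exact_mod_cast hr
    linarith
  have h1γ : 1 - γ = 1 / ((r:ℝ) - 1) - η := by
    rw [hγ]
    field_simp
    ring
  have hkR : (k : ℝ) ≤ (r:ℝ) - 1 := by
    have : (k:ℝ) + 1 ≤ (r:ℝ) := by exact_mod_cast hk
    linarith
  -- conclude
  have h1γ0 : 0 ≤ 1 - γ := by linarith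
  have hTbound : (T.card : ℝ) * ((1 - γ) * n) ≤ (k : ℝ) * ((1 - γ) * n) := by
    have : (0:ℝ) ≤ (1 - γ) * n := by positivity
    nlinarith
  have key : η * n ≤ (n : ℝ) - (k : ℝ) * ((1 - γ) * n) := by
    rcases Nat.eq_zero_or_pos k with hk0 | hk1
    · subst hk0; simp; nlinarith [Nat.cast_nonneg (α := ℝ) n]
    · have hk1' : (1:ℝ) ≤ (k:ℝ) := by exact_mod_cast hk1
      have hkdiv : (k:ℝ) * (1 / ((r:ℝ) - 1)) ≤ 1 := by
        rw [mul_one_div]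
        rw [div_le_one (by linarith)]
        exact hkR
      have hn0 : (0:ℝ) ≤ (n:ℝ) := Nat.cast_nonneg n
      rw [h1γ]
      have e1 : 0 ≤ (n:ℝ) * (1 - (k:ℝ) * (1 / ((r:ℝ) - 1))) := mul_nonneg hn0 (by linarith)
      have e2 : 0 ≤ (n:ℝ) * (((k:ℝ) - 1) * η) :=
        mul_nonneg hn0 (mul_nonneg (by linarith) hη.le)
      nlinarith [e1, e2]
  linarith

lemma candF_eq_of_eq01 {n r m : ℕ} (G : SimpleGraph (Fin n)) (c : Fin (m+2) → Fin r)
    (h01 : c 1 = c 0) (g : Fin (m+1) → Fin n) :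
    candF G c g = candF G (c ∘ Fin.succ) (Fin.tail g) := by
  ext x
  rw [mem_candF, mem_candF]
  constructor
  · intro hx u hu
    simp only [Function.comp_apply, Fin.succ_zero_eq_one] at hu
    rw [h01] at hu
    exact hx u.succ hu
  · intro hx u hu
    induction u using Fin.cases with
    | zero =>
      rw [Fin.succ_zero_eq_one, h01] at hu
      exact absurd rfl hu
    | succ w =>
      have : (c ∘ Fin.succ) w.succ ≠ (c ∘ Fin.succ) 0 := by
        simp only [Function.comp_apply, Fin.succ_zero_eq_one]
        rw [h01]
        exact hu
      exact hx w this

open scoped Classical in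
lemma cs_card {n r m : ℕ} (G : SimpleGraph (Fin n)) (c : Fin (m+2) → Fin r) (h01 : c 1 = c 0) :
    ((homsF G (c ∘ Fin.succ)).card : ℝ)^2 ≤ (n:ℝ)^m * ((homsF G c).card : ℝ) := by
  set c' : Fin (m+1) → Fin r := c ∘ Fin.succ with hc'
  set c'' : Fin m → Fin r := c' ∘ Fin.succ with hc''
  have hA : (homsF G c).card
      = ∑ g'' ∈ homsF G c'', (candF G c' g'').card * (candF G c' g'').card := by
    rw [peel G c]
    rw [← Finset.sum_fiberwise_of_maps_to (g := Fin.tail) (t := homsF G c'')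
      (fun g hg => tail_mem_homsF hg) (fun g => (candF G c g).card)]
    refine Finset.sum_congr rfl fun g'' hg'' => ?_
    have : ∀ g ∈ (homsF G c').filter (fun g => Fin.tail g = g''),
        (candF G c g).card = (candF G c' g'').card := by
      intro g hg
      simp only [mem_filter] at hg
      rw [candF_eq_of_eq01 G c h01 g, hg.2]
    rw [Finset.sum_congr rfl this, Finset.sum_const, smul_eq_mul,
      fiber_card G c' g'' hg'']
  have hB : (homsF G c').card = ∑ g'' ∈ homsF G c'', (candF G c' g'').card := peel G c'
  have hCS := Finset.sum_mul_sq_le_sq_mul_sq (homsF G c'')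
    (fun g'' => ((candF G c' g'').card : ℝ)) 1
  simp only [Pi.one_apply, mul_one, one_pow, Finset.sum_const, nsmul_eq_mul] at hCS
  have hcardle : ((homsF G c'').card : ℝ) ≤ (n:ℝ)^m := by
    have : (homsF G c'').card ≤ n ^ m := by
      calc (homsF G c'').card ≤ (univ : Finset (Fin m → Fin n)).card :=
            Finset.card_le_card (Finset.filter_subset _ _)
        _ = n ^ m := by simp [Fintype.card_fun]
    exact_mod_cast this
  have hsum2 : ∑ g'' ∈ homsF G c'', ((candF G c' g'').card : ℝ)^2 = ((homsF G c).card : ℝ) := by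
    rw [hA]
    push_cast
    refine Finset.sum_congr rfl fun g'' _ => ?_
    ring
  have hsum1 : ∑ g'' ∈ homsF G c'', ((candF G c' g'').card : ℝ) = ((homsF G c').card : ℝ) := by
    rw [hB]
    push_cast
    rfl
  rw [hsum2, hsum1] at hCS
  have h0 : (0:ℝ) ≤ ((homsF G c).card : ℝ) := by positivity
  nlinarith [hCS, hcardle, h0]

open scoped Classical in
lemma many_homs {n r : ℕ} (G : SimpleGraph (Fin n)) {γ η : ℝ}
    (hdeg : ∀ v, γ * n ≤ (G.degree v : ℝ))
    (hγ : γ = ((r:ℝ) - 2) / ((r:ℝ) - 1) + η) (hγle : γ ≤ 1) (hη : 0 < η) (hη1 : η ≤ 1)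
    (hr : 3 ≤ r) (hn : 0 < n) :
    ∀ k, ∀ c : Fin k → Fin r, η ^ (2^k) * (n:ℝ)^k ≤ ((homsF G c).card : ℝ) := by
  intro k
  induction k with
  | zero =>
    intro c
    have : homsF G c = univ := by
      ext f
      simp only [mem_homsF, Finset.mem_univ, iff_true]
      intro u
      exact absurd u.2 (by omega)
    rw [this]
    simp only [pow_zero, pow_one, mul_one, Finset.card_univ, Fintype.card_fun]
    simpa using hη1
  | succ k ih =>
    intro c
    by_cases hk : k + 1 ≤ r
    · -- greedy step
      have hpeel := peel G c
      have hlow : ∀ g ∈ homsF G (c ∘ Fin.succ), η * n ≤ ((candF G c g).card : ℝ) :=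
        fun g _ => candF_card_lb G c g hdeg hγ hγle hη hη1 hr hk
      have hsum : ((homsF G (c ∘ Fin.succ)).card : ℝ) * (η * n)
          ≤ ((homsF G c).card : ℝ) := by
        rw [hpeel]
        push_cast
        calc ((homsF G (c ∘ Fin.succ)).card : ℝ) * (η * n)
            = ∑ _g ∈ homsF G (c ∘ Fin.succ), η * (n:ℝ) := by
              rw [Finset.sum_const, nsmul_eq_mul]
          _ ≤ ∑ g ∈ homsF G (c ∘ Fin.succ), ((candF G c g).card : ℝ) :=
              Finset.sum_le_sum hlow
      have hih := ih (c ∘ Fin.succ)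
      have hηn : (0:ℝ) ≤ η * n := by positivity
      have h1 : η ^ (2^k) * (n:ℝ)^k * (η * n) ≤ ((homsF G c).card : ℝ) :=
        le_trans (mul_le_mul_of_nonneg_right hih hηn) hsum
      have hexp : η ^ (2^(k+1)) ≤ η ^ (2^k + 1) := by
        apply pow_le_pow_of_le_one hη.le hη1
        have : 2^k ≥ 1 := Nat.one_le_two_pow
        calc 2^k + 1 ≤ 2^k + 2^k := by omega
          _ = 2^(k+1) := by ring
      calc η ^ (2^(k+1)) * (n:ℝ)^(k+1) ≤ η ^ (2^k + 1) * (n:ℝ)^(k+1) := by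
            apply mul_le_mul_of_nonneg_right hexp (by positivity)
        _ = η ^ (2^k) * (n:ℝ)^k * (η * n) := by ring
        _ ≤ _ := h1
    · -- Cauchy–Schwarz step
      have hrk : r ≤ k := by omega
      obtain ⟨m, rfl⟩ : ∃ m, k = m + 1 := ⟨k - 1, by omega⟩
      obtain ⟨u, v, huv, hcuv⟩ := Fintype.exists_ne_map_eq_of_card_lt c (by
        simp only [Fintype.card_fin]
        omega)
      set σ₁ : Equiv.Perm (Fin (m+2)) := Equiv.swap 0 u with hσ₁
      set v₁ : Fin (m+2) := σ₁ v with hv₁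
      have h01 : (0 : Fin (m+2)) ≠ 1 := by
        exact Fin.ne_of_val_ne (by simp)
      have h0v₁ : (0 : Fin (m+2)) ≠ v₁ := by
        intro h0
        apply huv
        have hv : σ₁ v₁ = v := by rw [hv₁, Equiv.swap_apply_self]
        rw [← h0, hσ₁, Equiv.swap_apply_left] at hv
        exact hv
      set σ : Equiv.Perm (Fin (m+2)) := (Equiv.swap 1 v₁).trans σ₁ with hσ
      have hσ0 : σ 0 = u := by
        show σ₁ ((Equiv.swap 1 v₁) 0) = u
        rw [Equiv.swap_apply_of_ne_of_ne h01 h0v₁, hσ₁, Equiv.swap_apply_left]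
      have hσ1 : σ 1 = v := by
        show σ₁ ((Equiv.swap 1 v₁) 1) = v
        rw [Equiv.swap_apply_left, hv₁, Equiv.swap_apply_self]
      set d : Fin (m+2) → Fin r := c ∘ σ with hdd
      have hd : d 1 = d 0 := by
        show c (σ 1) = c (σ 0)
        rw [hσ0, hσ1, hcuv]
      have hcs := cs_card G d hd
      have hperm : (homsF G d).card = (homsF G c).card := homsF_comp_perm_card G c σ
      have hihd := ih (d ∘ Fin.succ)
      have hL0 : 0 ≤ η ^ (2^(m+1)) * (n:ℝ)^(m+1) := by positivity
      have hkey : (η^(2^(m+1)) * (n:ℝ)^(m+1))^2 ≤ (n:ℝ)^m * ((homsF G c).card : ℝ) := by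
        calc (η^(2^(m+1)) * (n:ℝ)^(m+1))^2
            ≤ ((homsF G (d ∘ Fin.succ)).card : ℝ)^2 := pow_le_pow_left₀ hL0 hihd 2
          _ ≤ (n:ℝ)^m * ((homsF G d).card : ℝ) := hcs
          _ = (n:ℝ)^m * ((homsF G c).card : ℝ) := by rw [hperm]
      have hnm : (0:ℝ) < (n:ℝ)^m := by positivity
      rw [show (2:ℕ)^(m+1+1) = 2^(m+1) * 2 from by ring, pow_mul]
      rw [← mul_le_mul_iff_of_pos_right hnm]
      calc (η^(2^(m+1)))^2 * (n:ℝ)^(m+1+1) * (n:ℝ)^m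
          = (η^(2^(m+1)) * (n:ℝ)^(m+1))^2 := by ring
        _ ≤ (n:ℝ)^m * ((homsF G c).card : ℝ) := hkey
        _ = ((homsF G c).card : ℝ) * (n:ℝ)^m := by ring

open scoped Classical in
lemma card_eq_fiber (h n : ℕ) (a b : Fin h) (hab : a ≠ b) :
    (univ.filter fun f : Fin h → Fin n => f a = f b).card ≤ n ^ (h - 1) := by
  have hcard : Fintype.card ({w : Fin h // w ≠ b} → Fin n) = n ^ (h - 1) := by
    rw [Fintype.card_fun, Fintype.card_fin]
    congr 1
    simp [Ne, Fintype.card_subtype_compl]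
  calc (univ.filter fun f : Fin h → Fin n => f a = f b).card
      ≤ (univ : Finset ({w : Fin h // w ≠ b} → Fin n)).card := by
        apply Finset.card_le_card_of_injOn (fun f => fun w => f w.1) (fun f _ => mem_univ _)
        intro f1 h1 f2 h2 heq
        simp only [mem_coe, mem_filter, mem_univ, true_and] at h1 h2
        funext w
        by_cases hw : w = b
        · subst hw
          have e1 := congrFun heq ⟨a, hab⟩
          simp only at e1
          rw [← h1, ← h2]
          exact e1
        · exact congrFun heq ⟨w, hw⟩
    _ = n ^ (h - 1) := by rw [Finset.card_univ, hcard]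

open scoped Classical in
lemma card_noninj (h n : ℕ) :
    (univ.filter fun f : Fin h → Fin n => ¬ Function.Injective f).card ≤ h^2 * n ^ (h - 1) := by
  have hsub : (univ.filter fun f : Fin h → Fin n => ¬ Function.Injective f) ⊆
      (univ : Finset (Fin h)).offDiag.biUnion
        (fun p => univ.filter fun f : Fin h → Fin n => f p.1 = f p.2) := by
    intro f hf
    simp only [mem_filter, mem_univ, true_and, Function.Injective, not_forall] at hf
    obtain ⟨a, b, hfab, hab⟩ := hf
    simp only [mem_biUnion, Finset.mem_offDiag, mem_univ, true_and, mem_filter]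
    exact ⟨(a, b), hab, hfab⟩
  calc (univ.filter fun f : Fin h → Fin n => ¬ Function.Injective f).card
      ≤ ∑ p ∈ (univ : Finset (Fin h)).offDiag,
          (univ.filter fun f : Fin h → Fin n => f p.1 = f p.2).card :=
        le_trans (Finset.card_le_card hsub) Finset.card_biUnion_le
    _ ≤ ∑ _p ∈ (univ : Finset (Fin h)).offDiag, n ^ (h - 1) := by
        apply Finset.sum_le_sum
        intro p hp
        simp only [Finset.mem_offDiag] at hp
        exact card_eq_fiber h n p.1 p.2 hp.2.2
    _ = (univ : Finset (Fin h)).offDiag.card * n ^ (h-1) := by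
        rw [Finset.sum_const, smul_eq_mul]
    _ ≤ h^2 * n ^ (h-1) := by
        apply Nat.mul_le_mul_right
        rw [Finset.offDiag_card]
        simp only [Finset.card_univ, Fintype.card_fin]
        calc h * h - h ≤ h * h := Nat.sub_le _ _
          _ = h ^ 2 := (sq h).symm

open SimpleGraph

open scoped Classical in
lemma copyCount_eq {h n : ℕ} (H : SimpleGraph (Fin h)) (G : SimpleGraph (Fin n)) :
    _root_.copyCount H G = (univ.filter fun f : Fin h → Fin n =>
      (∀ u v, H.Adj u v → G.Adj (f u) (f v)) ∧ Function.Injective f).card := by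
  let e : {f : Fin h → Fin n //
      (∀ u v, H.Adj u v → G.Adj (f u) (f v)) ∧ Function.Injective f} ≃
      {φ : H →g G // Function.Injective φ} :=
    { toFun := fun p => ⟨⟨p.1, fun {a b} hab => p.2.1 a b hab⟩, p.2.2⟩
      invFun := fun q => ⟨⇑q.1, fun u v huv => q.1.map_rel huv, q.2⟩
      left_inv := fun p => rfl
      right_inv := fun q => rfl }
  rw [_root_.copyCount, ← Nat.card_congr e, Nat.card_eq_fintype_card, Fintype.card_subtype]

open scoped Classical in
lemma copyCount_pos {h n : ℕ} (H : SimpleGraph (Fin h)) (G : SimpleGraph (Fin n))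
    (φ : H →g G) (hφ : Function.Injective φ) : 1 ≤ _root_.copyCount H G := by
  rw [copyCount_eq]
  apply Finset.card_pos.mpr
  refine ⟨⇑φ, ?_⟩
  simp only [mem_filter, mem_univ, true_and]
  exact ⟨fun u v huv => φ.map_rel huv, hφ⟩

lemma m_bound {h n m : ℕ} (H : SimpleGraph (Fin h)) (G : SimpleGraph (Fin n))
    (he : H.edgeSet.Nonempty) (hm : HasEdgeDisjointCopies H G m) : m ≤ n * n := by
  obtain ⟨f, hinj, hdisj⟩ := hm
  obtain ⟨e₀, he₀⟩ := he
  have hs : Function.Surjective (fun p : Fin n × Fin n => s(p.1, p.2)) := by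
    intro e
    induction e using Sym2.ind with
    | _ x y => exact ⟨(x, y), rfl⟩
  have hc2 : Fintype.card (Sym2 (Fin n)) ≤ n * n := by
    have := Fintype.card_le_of_surjective _ hs
    simpa using this
  have hFinj : Function.Injective (fun i : Fin m => Sym2.map (f i) e₀) := by
    intro i j hij
    by_contra hne
    have hd : Disjoint (copyEdges H ⇑(f i)) (copyEdges H ⇑(f j)) := hdisj hne
    have hi : Sym2.map (f i) e₀ ∈ copyEdges H (f i) := Set.mem_image_of_mem _ he₀
    have hj : Sym2.map (f j) e₀ ∈ copyEdges H (f j) := Set.mem_image_of_mem _ he₀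
    simp only at hij
    rw [hij] at hi
    exact (Set.disjoint_left.mp hd hi) hj
  calc m = Fintype.card (Fin m) := (Fintype.card_fin m).symm
    _ ≤ Fintype.card (Sym2 (Fin n)) := Fintype.card_le_of_injective _ hFinj
    _ ≤ n * n := hc2

lemma edgeSet_nonempty_of_chrom {h r : ℕ} (H : SimpleGraph (Fin h)) (hr : 3 ≤ r)
    (hχ : H.chromaticNumber = (r : ℕ∞)) : H.edgeSet.Nonempty := by
  by_contra hne
  rw [Set.not_nonempty_iff_eq_empty] at hne
  have hcol : H.Colorable 1 := by
    refine ⟨SimpleGraph.Coloring.mk (fun _ => (0 : Fin 1)) ?_⟩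
    intro u v hadj
    exfalso
    have hmem : s(u,v) ∈ H.edgeSet := hadj
    rw [hne] at hmem
    exact hmem
  have h1 := hcol.chromaticNumber_le
  rw [hχ] at h1
  have h3 : ((3:ℕ) : ℕ∞) ≤ ((r:ℕ) : ℕ∞) := by exact_mod_cast hr
  have := le_trans h3 h1
  norm_num at this

theorem stmt_7 (h : ℕ) (H : SimpleGraph (Fin h)) (r : ℕ) (hr : 3 ≤ r)
    (hχ : H.chromaticNumber = (r : ℕ∞)) (γ : ℝ)
    (hγ₁ : ((r : ℝ) - 2) / ((r : ℝ) - 1) < γ) (hγ₂ : γ ≤ 1) :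
    ∃ μ : ℝ, 0 < μ ∧
      ∀ ε : ℝ, 0 < ε → ∀ n : ℕ, 0 < n → ∀ G : SimpleGraph (Fin n),
        (∀ v, γ * n ≤ (Nat.card (G.neighborSet v) : ℝ)) →
        (∃ m : ℕ, ε * n ^ 2 ≤ (m : ℝ) ∧ HasEdgeDisjointCopies H G m) →
        μ * ε * (n : ℝ) ^ h ≤ (_root_.copyCount H G : ℝ) := by
  classical
  have hr3 : (3:ℝ) ≤ (r:ℝ) := by exact_mod_cast hr
  set η : ℝ := γ - ((r:ℝ) - 2) / ((r:ℝ) - 1) with hηdef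
  have hηpos : 0 < η := by rw [hηdef]; linarith
  have hfrac0 : 0 ≤ ((r:ℝ) - 2) / ((r:ℝ) - 1) := div_nonneg (by linarith) (by linarith)
  have hη1 : η ≤ 1 := by rw [hηdef]; linarith
  have hγeq : γ = ((r:ℝ) - 2) / ((r:ℝ) - 1) + η := by rw [hηdef]; ring
  -- coloring
  have hcol : H.Colorable r := SimpleGraph.chromaticNumber_le_iff_colorable.mp hχ.le
  obtain ⟨C⟩ := hcol
  have he : H.edgeSet.Nonempty := edgeSet_nonempty_of_chrom H hr hχ
  have hh1 : 1 ≤ h := by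
    obtain ⟨e₀, he₀⟩ := he
    induction e₀ using Sym2.ind with
    | _ x y => exact x.pos
  set c0 : ℝ := η ^ (2^h) with hc0def
  have hc0pos : 0 < c0 := by positivity
  set R : ℝ := 2 * (h:ℝ)^2 / c0 + 1 with hRdef
  have hRpos : 0 < R := by positivity
  refine ⟨min (c0/2) (1/R^h), lt_min (by positivity) (by positivity), ?_⟩
  intro ε hε n hn G hdeg hex
  obtain ⟨m, hm, hcopies⟩ := hex
  set μ : ℝ := min (c0/2) (1/R^h) with hμdef
  have hμpos : 0 < μ := lt_min (by positivity) (by positivity)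
  have hnR : (0:ℝ) < (n:ℝ) := by exact_mod_cast hn
  -- degrees
  have hdeg' : ∀ v, γ * n ≤ (G.degree v : ℝ) := by
    intro v
    have := hdeg v
    rwa [Nat.card_eq_fintype_card, SimpleGraph.card_neighborSet_eq_degree] at this
  -- m ≥ 1 and a copy exists
  have hm1 : 1 ≤ m := by
    by_contra hm0
    have : m = 0 := by omega
    subst this
    have : (0:ℝ) < ε * (n:ℝ)^2 := by positivity
    simp only [Nat.cast_zero] at hm
    linarith
  have hcopy1 : 1 ≤ _root_.copyCount H G := by
    obtain ⟨fcop, hfinj, _⟩ := hcopies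
    exact copyCount_pos H G (fcop ⟨0, hm1⟩) (hfinj _)
  -- ε ≤ 1
  have hε1 : ε ≤ 1 := by
    have hb := m_bound H G he hcopies
    have hb' : (m:ℝ) ≤ (n:ℝ) * (n:ℝ) := by exact_mod_cast hb
    have h2 : ε * (n:ℝ)^2 ≤ 1 * (n:ℝ)^2 := by nlinarith
    exact (mul_le_mul_iff_of_pos_right (by positivity)).mp h2
  -- main count
  have hmain := many_homs G hdeg' hγeq hγ₂ hηpos hη1 hr hn h ⇑C
  have hsub : homsF G ⇑C ⊆
      (univ.filter fun f : Fin h → Fin n => ∀ u v, H.Adj u v → G.Adj (f u) (f v)) := by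
    intro f hf
    rw [mem_homsF] at hf
    simp only [mem_filter, mem_univ, true_and]
    exact fun u v huv => hf u v (C.valid huv)
  have hsplit : (univ.filter fun f : Fin h → Fin n =>
        ∀ u v, H.Adj u v → G.Adj (f u) (f v)).card
      ≤ _root_.copyCount H G + h^2 * n^(h-1) := by
    rw [copyCount_eq]
    have hs2 : (univ.filter fun f : Fin h → Fin n =>
          ∀ u v, H.Adj u v → G.Adj (f u) (f v))
        ⊆ (univ.filter fun f : Fin h → Fin n =>
            (∀ u v, H.Adj u v → G.Adj (f u) (f v)) ∧ Function.Injective f)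
          ∪ (univ.filter fun f : Fin h → Fin n => ¬ Function.Injective f) := by
      intro f hf
      simp only [mem_filter, mem_univ, true_and] at hf
      by_cases hfi : Function.Injective f
      · exact Finset.mem_union_left _ (by simp only [mem_filter, mem_univ, true_and]; exact ⟨hf, hfi⟩)
      · exact Finset.mem_union_right _ (by simp only [mem_filter, mem_univ, true_and]; exact hfi)
    refine le_trans (Finset.card_le_card hs2) ?_
    refine le_trans (Finset.card_union_le _ _) ?_
    exact Nat.add_le_add_left (card_noninj h n) _
  have hchain : c0 * (n:ℝ)^h ≤ (_root_.copyCount H G : ℝ) + (h:ℝ)^2 * (n:ℝ)^(h-1) := by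
    calc c0 * (n:ℝ)^h ≤ ((homsF G ⇑C).card : ℝ) := hmain
      _ ≤ (((univ.filter fun f : Fin h → Fin n =>
            ∀ u v, H.Adj u v → G.Adj (f u) (f v)).card : ℕ) : ℝ) := by
          exact_mod_cast Finset.card_le_card hsub
      _ ≤ (_root_.copyCount H G : ℝ) + (h:ℝ)^2 * (n:ℝ)^(h-1) := by
          exact_mod_cast hsplit
  have hpowh : (n:ℝ)^(h-1) * (n:ℝ) = (n:ℝ)^h := by
    have hhe : h - 1 + 1 = h := Nat.succ_pred_eq_of_pos hh1
    rw [← pow_succ, hhe]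
  by_cases hbig : (h:ℝ)^2 ≤ c0/2 * n
  · -- large n
    have h1 : (h:ℝ)^2 * (n:ℝ)^(h-1) ≤ c0/2 * (n:ℝ)^h := by
      calc (h:ℝ)^2 * (n:ℝ)^(h-1) ≤ (c0/2 * n) * (n:ℝ)^(h-1) :=
            mul_le_mul_of_nonneg_right hbig (by positivity)
        _ = c0/2 * ((n:ℝ)^(h-1) * n) := by ring
        _ = c0/2 * (n:ℝ)^h := by rw [hpowh]
    have hcc : c0/2 * (n:ℝ)^h ≤ (_root_.copyCount H G : ℝ) := by linarith
    have s1 : μ * ε ≤ c0/2 := by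
      calc μ * ε ≤ μ * 1 := mul_le_mul_of_nonneg_left hε1 hμpos.le
        _ = μ := mul_one μ
        _ ≤ c0/2 := min_le_left _ _
    calc μ * ε * (n:ℝ)^h ≤ c0/2 * (n:ℝ)^h :=
          mul_le_mul_of_nonneg_right s1 (by positivity)
      _ ≤ _ := hcc
  · -- small n
    have hnR2 : (n:ℝ) ≤ R := by
      push_neg at hbig
      rw [hRdef]
      rw [div_add' _ _ _ (ne_of_gt hc0pos), le_div_iff₀ hc0pos]
      nlinarith
    have hpow : (n:ℝ)^h ≤ R^h := pow_le_pow_left₀ hnR.le hnR2 h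
    have s1 : μ * ε ≤ 1/R^h := by
      calc μ * ε ≤ μ * 1 := mul_le_mul_of_nonneg_left hε1 hμpos.le
        _ = μ := mul_one μ
        _ ≤ 1/R^h := min_le_right _ _
    have s2 : μ * ε * (n:ℝ)^h ≤ (1/R^h) * R^h := by
      apply mul_le_mul s1 hpow (by positivity) (by positivity)
    have s3 : (1/R^h) * R^h = 1 := by field_simp
    have hc1 : (1:ℝ) ≤ (_root_.copyCount H G : ℝ) := by exact_mod_cast hcopy1
    linarith
end

section
/- Let k ≥ 2 be an integer and let H be a graph with chromatic number χ(H) = 3 that has a critical edge xy and whose odd girth is at least 2k+1. Then there is a partition V(H) = A₁ ∪ A₂ ∪ ⋯ ∪ A_{2k+1} into pairwise disjoint sets with A₁ = {x} and A₂ = {y}, such that every edge of H has one endpoint in A_i and the other in A_{i+1} for some i ∈ {1,…,2k+1} (indices taken modulo 2k+1). In particular, H is homomorphic to the cycle C_{2k+1}. -/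
open SimpleGraph

section Aux
variable {V : Type} {G : SimpleGraph V}

lemma aux_getVert_inj {a b : V} (p : G.Walk a b) :
    p.IsPath → ∀ i, i ≤ p.length → ∀ j, j ≤ p.length → p.getVert i = p.getVert j → i = j := by
  induction p with
  | nil => intro _ i hi j hj _; simp at hi hj; omega
  | @cons a c b h q ih =>
    intro hp i hi j hj hij
    rw [SimpleGraph.Walk.cons_isPath_iff] at hp
    match i, j with
    | 0, 0 => rfl
    | 0, j+1 =>
      exfalso
      apply hp.2
      rw [SimpleGraph.Walk.mem_support_iff_exists_getVert]
      exact ⟨j, hij.symm, by simpa using hj⟩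
    | i+1, 0 =>
      exfalso
      apply hp.2
      rw [SimpleGraph.Walk.mem_support_iff_exists_getVert]
      exact ⟨i, hij, by simpa using hi⟩
    | i+1, j+1 =>
      have := ih hp.1 i (by simpa using hi) j (by simpa using hj) hij
      omega

lemma aux_parity (C : G.Coloring (ZMod 2)) {a b : V} (w : G.Walk a b) :
    C b = C a + (w.length : ZMod 2) := by
  induction w with
  | nil => simp
  | @cons a c b h q ih =>
    have h1 : C c = C a + 1 := by
      have hne := C.valid h
      revert hne
      generalize C a = s; generalize C c = t
      revert s t; decide
    rw [SimpleGraph.Walk.length_cons]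
    push_cast
    rw [ih, h1]; ring

open Fin.NatCast in
lemma aux_cycle_copy {a b : V} (p : G.Walk a b) (hp : p.IsPath) (hL : 2 ≤ p.length)
    (hba : G.Adj b a) : HasCopy (cycleGraph (p.length + 1)) G := by
  have hv1 : ((1 : Fin (p.length + 1))).val = 1 := by
    rw [show (1 : Fin (p.length + 1)) = ((1 : ℕ) : Fin (p.length + 1)) by norm_cast]
    exact Fin.val_cast_of_lt (by omega)
  have key : ∀ i j : Fin (p.length + 1), (i - j).val = 1 →
      G.Adj (p.getVert j.val) (p.getVert i.val) := by
    intro i j hij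
    have hij' : i = j + 1 := by
      have h1 : i - j = 1 := Fin.ext (by rw [hij, hv1])
      have h2 := sub_eq_iff_eq_add.mp h1
      rw [h2]; exact add_comm 1 j
    by_cases hjl : j = Fin.last p.length
    · have h0 : i = 0 := by rw [hij', hjl, Fin.last_add_one]
      rw [hjl, h0]
      simpa [SimpleGraph.Walk.getVert_length] using hba
    · have hlt : j.val < p.length := Fin.val_lt_last hjl
      have : i.val = j.val + 1 := by
        rw [hij']
        exact Fin.val_add_one_of_lt (Fin.lt_last_iff_ne_last.mpr hjl)
      rw [this]
      exact p.adj_getVert_succ hlt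
  refine ⟨⟨fun i => p.getVert i.val, ?_⟩, ?_⟩
  · intro i j hadj
    rw [cycleGraph_adj'] at hadj
    rcases hadj with h | h
    · exact (key i j h).symm
    · exact key j i h
  · intro i j hij
    exact Fin.ext (aux_getVert_inj p hp i.val (by omega) j.val (by omega) hij)

end Aux

open Fin.NatCast in
theorem stmt_9 {V : Type} [Fintype V] (H : SimpleGraph V) (k : ℕ) (hk : 2 ≤ k)
    (hχ : H.chromaticNumber = 3) (x y : V) (hxy : H.Adj x y)
    (hcrit : (H.deleteEdges {s(x, y)}).chromaticNumber < H.chromaticNumber)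
    (hog : ∀ m : ℕ, 3 ≤ m → Odd m → m < 2 * k + 1 → ¬ HasCopy (cycleGraph m) H) :
    (∃ A : Fin (2 * k + 1) → Set V,
      A 0 = {x} ∧ A 1 = {y} ∧
      (Pairwise fun i j => Disjoint (A i) (A j)) ∧
      (⋃ i, A i) = Set.univ ∧
      (∀ u v : V, H.Adj u v →
        ∃ i : Fin (2 * k + 1), (u ∈ A i ∧ v ∈ A (i + 1)) ∨ (v ∈ A i ∧ u ∈ A (i + 1)))) ∧
    Nonempty (H →g cycleGraph (2 * k + 1)) := by
  classical
  set H' := H.deleteEdges {s(x, y)} with hH'def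
  have hle : H' ≤ H := SimpleGraph.deleteEdges_le _
  have hadj' : ∀ u v : V, H.Adj u v → s(u, v) ≠ s(x, y) → H'.Adj u v := by
    intro u v h hne
    rw [hH'def, SimpleGraph.deleteEdges_adj]
    exact ⟨h, by simpa using hne⟩
  have hn2 : ¬ H.Colorable 2 := by
    intro h
    have := SimpleGraph.chromaticNumber_le_iff_colorable.mpr h
    rw [hχ] at this
    have h32 : ¬ ((3 : ℕ∞) ≤ ((2 : ℕ) : ℕ∞)) := by norm_num
    exact h32 this
  have h2 : H'.Colorable 2 := by
    rw [← SimpleGraph.chromaticNumber_le_iff_colorable]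
    rw [hχ] at hcrit
    have h3 : (3 : ℕ∞) = ((2 : ℕ) : ℕ∞) + 1 := by norm_num
    rw [h3] at hcrit
    exact (ENat.lt_add_one_iff (by simp)).mp hcrit
  have C : H'.Coloring (ZMod 2) := h2.toColoring (by simp)
  have zstep : ∀ s t : ZMod 2, s ≠ t → t = s + 1 := by decide
  have z_add_ne : ∀ s : ZMod 2, s + 1 ≠ s := by decide
  have z11 : ∀ s : ZMod 2, s + 1 + 1 = s := by decide
  -- x and y have the same color
  have hcxy : C x = C y := by
    by_contra hne
    apply hn2
    have Cc : H.Coloring (ZMod 2) := by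
      refine SimpleGraph.Coloring.mk C ?_
      intro u v h
      by_cases hs : s(u, v) = s(x, y)
      · rcases Sym2.eq_iff.mp hs with ⟨rfl, rfl⟩ | ⟨rfl, rfl⟩
        · exact hne
        · exact fun hh => hne hh.symm
      · exact C.valid (hadj' u v h hs)
    simpa using Cc.colorable
  -- x and y are in the same component of H'
  have hreach : H'.Reachable x y := by
    by_contra hr
    apply hn2
    have Cc : H.Coloring (ZMod 2) := by
      refine SimpleGraph.Coloring.mk
        (fun v => C v + (if H'.Reachable y v then 1 else 0)) ?_
      intro u v h
      show C u + (if H'.Reachable y u then 1 else 0) ≠ C v + (if H'.Reachable y v then 1 else 0)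
      by_cases hs : s(u, v) = s(x, y)
      · rcases Sym2.eq_iff.mp hs with ⟨hu, hv⟩ | ⟨hu, hv⟩
        · rw [hu, hv]
          rw [if_neg (fun hh => hr hh.symm), if_pos (SimpleGraph.Reachable.refl y)]
          rw [add_zero, hcxy]
          exact fun hh => z_add_ne _ hh.symm
        · rw [hu, hv]
          rw [if_pos (SimpleGraph.Reachable.refl y), if_neg (fun hh => hr hh.symm)]
          rw [add_zero, hcxy]
          exact fun hh => z_add_ne _ hh
      · have h' := hadj' u v h hs
        have hiff : H'.Reachable y u ↔ H'.Reachable y v :=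
          ⟨fun hh => hh.trans h'.reachable, fun hh => hh.trans h'.symm.reachable⟩
        by_cases hy : H'.Reachable y u
        · rw [if_pos hy, if_pos (hiff.mp hy)]
          intro hh
          exact C.valid h' (add_right_cancel hh)
        · rw [if_neg hy, if_neg (fun hh => hy (hiff.mpr hh))]
          simpa using C.valid h'
    simpa using Cc.colorable
  -- parity of distances
  have parity_s : ∀ s v : V, H'.Reachable s v →
      C v = C s + ((H'.dist s v : ℕ) : ZMod 2) := by
    intro s v h
    obtain ⟨w, hw⟩ := h.exists_walk_length_eq_dist
    rw [← hw]
    exact aux_parity C w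
  have dle : ∀ s u v : V, H'.Reachable s u → H'.Adj u v →
      H'.dist s v ≤ H'.dist s u + 1 := by
    intro s u v hr hadj
    obtain ⟨w, hw⟩ := hr.exists_walk_length_eq_dist
    have := SimpleGraph.dist_le (w.concat hadj)
    rwa [SimpleGraph.Walk.length_concat, hw] at this
  have step : ∀ s u v : V, H'.Reachable s u → H'.Adj u v →
      (H'.dist s v = H'.dist s u + 1 ∨ H'.dist s u = H'.dist s v + 1) := by
    intro s u v hr hadj
    have hrv : H'.Reachable s v := hr.trans hadj.reachable
    have h1 := dle s u v hr hadj
    have h2 := dle s v u hrv hadj.symm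
    have hne : H'.dist s u ≠ H'.dist s v := by
      intro hEq
      have p1 := parity_s s u hr
      have p2 := parity_s s v hrv
      have hvalid := C.valid hadj
      rw [p1, p2, hEq] at hvalid
      exact hvalid rfl
    omega
  -- distance between x and y is at least 2k
  have hdxy : 2 * k ≤ H'.dist x y := by
    by_contra hlt
    push_neg at hlt
    have heven : Even (H'.dist x y) := by
      have hp := parity_s x y hreach
      rw [hcxy] at hp
      have h0 : ((H'.dist x y : ℕ) : ZMod 2) = 0 := (left_eq_add.mp hp)
      have := (ZMod.natCast_eq_zero_iff _ 2).mp h0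
      rw [Nat.even_iff]; omega
    have hne0 : H'.dist x y ≠ 0 := by
      intro h0
      exact hxy.ne ((hreach.dist_eq_zero_iff).mp h0)
    have h2le : 2 ≤ H'.dist x y := by
      rcases heven with ⟨r, hr⟩; omega
    obtain ⟨p, hp, hplen⟩ := hreach.exists_path_of_dist
    have hlen : (p.mapLe hle).length = H'.dist x y := by
      simpa using hplen
    have hcopy := aux_cycle_copy (p.mapLe hle)
      ((SimpleGraph.Walk.mapLe_isPath hle).mpr hp)
      (by rw [hlen]; omega)
      hxy.symm
    rw [hlen] at hcopy
    exact hog (H'.dist x y + 1) (by omega)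
      (by rw [Nat.odd_iff]; rcases heven with ⟨r, hr⟩; omega) (by omega) hcopy
  have tri0 : ∀ v : V, H'.Reachable x v → H'.Reachable y v →
      2 * k ≤ H'.dist x v + H'.dist y v := by
    intro v hxv hyv
    obtain ⟨w1, hw1⟩ := hxv.exists_walk_length_eq_dist
    obtain ⟨w2, hw2⟩ := hyv.exists_walk_length_eq_dist
    have := SimpleGraph.dist_le (w1.append w2.reverse)
    rw [SimpleGraph.Walk.length_append, SimpleGraph.Walk.length_reverse, hw1, hw2] at this
    omega
  have tri1 : ∀ u v : V, H'.Reachable x u → H'.Reachable y v → H'.Adj u v →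
      2 * k ≤ H'.dist x u + 1 + H'.dist y v := by
    intro u v hu hv hadj
    have h1 := dle x u v hu hadj
    have h2 := tri0 v (hu.trans hadj.reachable) hv
    omega
  -- the position function
  set pos : V → ℕ := fun v =>
    if H'.Reachable x v ∧ H'.dist x v ≤ k then H'.dist x v
    else if H'.Reachable y v ∧ H'.dist y v ≤ k - 1 then 2 * k - H'.dist y v
    else if C v = C x + ((k : ℕ) : ZMod 2) then k else k + 1
    with hposdef
  have hposle : ∀ v, pos v ≤ 2 * k := by
    intro v
    simp only [hposdef]
    split_ifs with h1 h2 h3 <;> omega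
  have h0x : pos x = 0 := by
    simp only [hposdef]
    rw [if_pos ⟨SimpleGraph.Reachable.refl x, by rw [SimpleGraph.dist_self]; omega⟩]
    exact SimpleGraph.dist_self
  have h2ky : pos y = 2 * k := by
    simp only [hposdef]
    rw [if_neg (fun h => by have := h.2; omega), if_pos ⟨SimpleGraph.Reachable.refl y,
      by rw [SimpleGraph.dist_self]; omega⟩, SimpleGraph.dist_self]
    omega
  have hunique0 : ∀ v, pos v = 0 → v = x := by
    intro v h
    simp only [hposdef] at h
    split_ifs at h with h1 h2 h3
    · exact ((h1.1.dist_eq_zero_iff).mp h).symm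
    · have := h2.2; omega
    all_goals omega
  have hunique2k : ∀ v, pos v = 2 * k → v = y := by
    intro v h
    simp only [hposdef] at h
    split_ifs at h with h1 h2 h3
    · have := h1.2; omega
    · have he0 : H'.dist y v = 0 := by have := h2.2; omega
      exact ((h2.1.dist_eq_zero_iff).mp he0).symm
    all_goals omega
  -- the key step lemma
  have key' : ∀ u v : V, H'.Adj u v → (pos v = pos u + 1 ∨ pos u = pos v + 1) := by
    intro u v hadj
    have hvalid := C.valid hadj
    by_cases h1u : H'.Reachable x u ∧ H'.dist x u ≤ k
    · by_cases h1v : H'.Reachable x v ∧ H'.dist x v ≤ k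
      · -- (1,1)
        have hs := step x u v h1u.1 hadj
        simp only [hposdef]
        rw [if_pos h1u, if_pos h1v]
        omega
      · have hrv : H'.Reachable x v := h1u.1.trans hadj.reachable
        have hdv : k < H'.dist x v := by
          by_contra hc; push_neg at hc; exact h1v ⟨hrv, hc⟩
        have hs := step x u v h1u.1 hadj
        by_cases h2v : H'.Reachable y v ∧ H'.dist y v ≤ k - 1
        · -- (1,2)
          have ht := tri1 u v h1u.1 h2v.1 hadj
          simp only [hposdef]
          rw [if_pos h1u, if_neg h1v, if_pos h2v]
          have := h1u.2
          have := h2v.2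
          omega
        · -- (1,3)
          have hdu : H'.dist x u = k := by omega
          have pu := parity_s x u h1u.1
          have hCv : C v = (C x + ((k : ℕ) : ZMod 2)) + 1 := by
            rw [zstep _ _ hvalid, pu, hdu]
          have hnc : ¬ (C v = C x + ((k : ℕ) : ZMod 2)) := by
            intro h
            exact z_add_ne _ (hCv.symm.trans h)
          simp only [hposdef]
          rw [if_pos h1u, if_neg h1v, if_neg h2v, if_neg hnc, hdu]
          omega
    · by_cases h2u : H'.Reachable y u ∧ H'.dist y u ≤ k - 1
      · by_cases h1v : H'.Reachable x v ∧ H'.dist x v ≤ k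
        · -- (2,1)
          have hru : H'.Reachable x u := h1v.1.trans hadj.symm.reachable
          have hdu : k < H'.dist x u := by
            by_contra hc; push_neg at hc; exact h1u ⟨hru, hc⟩
          have ht := tri1 v u h1v.1 h2u.1 hadj.symm
          simp only [hposdef]
          rw [if_neg h1u, if_pos h2u, if_pos h1v]
          have := h1v.2
          have := h2u.2
          omega
        · by_cases h2v : H'.Reachable y v ∧ H'.dist y v ≤ k - 1
          · -- (2,2)
            have hs := step y u v h2u.1 hadj
            simp only [hposdef]
            rw [if_neg h1u, if_pos h2u, if_neg h1v, if_pos h2v]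
            have := h2u.2
            have := h2v.2
            omega
          · -- (2,3)
            have hrv : H'.Reachable y v := h2u.1.trans hadj.reachable
            have hev : k - 1 < H'.dist y v := by
              by_contra hc; push_neg at hc; exact h2v ⟨hrv, hc⟩
            have hs := step y u v h2u.1 hadj
            have heu : H'.dist y u = k - 1 := by omega
            have pu := parity_s y u h2u.1
            have hcast : (((k - 1 : ℕ) : ZMod 2)) + 1 = ((k : ℕ) : ZMod 2) := by
              rw [← Nat.cast_add_one]
              congr 1
              omega
            have hCv : C v = C x + ((k : ℕ) : ZMod 2) := by
              rw [zstep _ _ hvalid, pu, heu, ← hcxy, add_assoc, hcast]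
            simp only [hposdef]
            rw [if_neg h1u, if_pos h2u, if_neg h1v, if_neg h2v, if_pos hCv, heu]
            omega
      · by_cases h1v : H'.Reachable x v ∧ H'.dist x v ≤ k
        · -- (3,1)
          have hru : H'.Reachable x u := h1v.1.trans hadj.symm.reachable
          have hdu : k < H'.dist x u := by
            by_contra hc; push_neg at hc; exact h1u ⟨hru, hc⟩
          have hs := step x v u h1v.1 hadj.symm
          have hdv : H'.dist x v = k := by omega
          have pv := parity_s x v h1v.1
          have hCu : C u = (C x + ((k : ℕ) : ZMod 2)) + 1 := by
            rw [zstep _ _ hvalid.symm, pv, hdv]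
          have hnc : ¬ (C u = C x + ((k : ℕ) : ZMod 2)) := by
            intro h
            exact z_add_ne _ (hCu.symm.trans h)
          simp only [hposdef]
          rw [if_neg h1u, if_neg h2u, if_neg hnc, if_pos h1v, hdv]
          omega
        · by_cases h2v : H'.Reachable y v ∧ H'.dist y v ≤ k - 1
          · -- (3,2)
            have hru : H'.Reachable y u := h2v.1.trans hadj.symm.reachable
            have heu : k - 1 < H'.dist y u := by
              by_contra hc; push_neg at hc; exact h2u ⟨hru, hc⟩
            have hs := step y v u h2v.1 hadj.symm
            have hev : H'.dist y v = k - 1 := by omega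
            have pv := parity_s y v h2v.1
            have hcast : (((k - 1 : ℕ) : ZMod 2)) + 1 = ((k : ℕ) : ZMod 2) := by
              rw [← Nat.cast_add_one]
              congr 1
              omega
            have hCu : C u = C x + ((k : ℕ) : ZMod 2) := by
              rw [zstep _ _ hvalid.symm, pv, hev, ← hcxy, add_assoc, hcast]
            simp only [hposdef]
            rw [if_neg h1u, if_neg h2u, if_pos hCu, if_neg h1v, if_pos h2v, hev]
            omega
          · -- (3,3)
            by_cases hcu : C u = C x + ((k : ℕ) : ZMod 2)
            · have hnc : ¬ (C v = C x + ((k : ℕ) : ZMod 2)) := by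
                intro h
                apply hvalid
                rw [hcu, h]
              simp only [hposdef]
              rw [if_neg h1u, if_neg h2u, if_pos hcu, if_neg h1v, if_neg h2v, if_neg hnc]
              omega
            · have hCu : C u = (C x + ((k : ℕ) : ZMod 2)) + 1 :=
                zstep _ _ (Ne.symm hcu)
              have hCv : C v = C x + ((k : ℕ) : ZMod 2) := by
                rw [zstep _ _ hvalid, hCu, z11]
              simp only [hposdef]
              rw [if_neg h1u, if_neg h2u, if_neg hcu, if_neg h1v, if_neg h2v, if_pos hCv]
              omega
  have hmain : ∀ u v : V, H.Adj u v → pos v = pos u + 1 ∨ pos u = pos v + 1 ∨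
      (pos u = 0 ∧ pos v = 2 * k) ∨ (pos v = 0 ∧ pos u = 2 * k) := by
    intro u v h
    by_cases hs : s(u, v) = s(x, y)
    · rcases Sym2.eq_iff.mp hs with ⟨rfl, rfl⟩ | ⟨rfl, rfl⟩
      · exact Or.inr (Or.inr (Or.inl ⟨h0x, h2ky⟩))
      · exact Or.inr (Or.inr (Or.inr ⟨h0x, h2ky⟩))
    · rcases key' u v (hadj' u v h hs) with h' | h'
      · exact Or.inl h'
      · exact Or.inr (Or.inl h')
  -- now move to Fin (2k+1)
  haveI : NeZero (2 * k + 1) := ⟨by omega⟩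
  set F : V → Fin (2 * k + 1) := fun v => -((pos v : ℕ) : Fin (2 * k + 1)) with hFdef
  have hcastinj : ∀ m n : ℕ, m ≤ 2 * k → n ≤ 2 * k →
      ((m : ℕ) : Fin (2 * k + 1)) = ((n : ℕ) : Fin (2 * k + 1)) → m = n := by
    intro m n hm hn h
    have := congrArg Fin.val h
    rwa [Fin.val_cast_of_lt (by omega), Fin.val_cast_of_lt (by omega)] at this
  have h2kneg : ((2 * k : ℕ) : Fin (2 * k + 1)) = -1 := by
    have h : ((2 * k : ℕ) : Fin (2 * k + 1)) + 1 = 0 := by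
      rw [← Nat.cast_add_one, Fin.natCast_self]
    exact eq_neg_of_add_eq_zero_left h
  have hF0 : ∀ v, F v = 0 ↔ pos v = 0 := by
    intro v
    simp only [hFdef]
    rw [neg_eq_zero]
    constructor
    · intro h
      have : ((pos v : ℕ) : Fin (2 * k + 1)) = ((0 : ℕ) : Fin (2 * k + 1)) := by
        rw [h, Nat.cast_zero]
      exact hcastinj _ _ (hposle v) (by omega) this
    · intro h
      rw [h, Nat.cast_zero]
  have hF1 : ∀ v, F v = 1 ↔ pos v = 2 * k := by
    intro v
    simp only [hFdef]
    rw [neg_eq_iff_eq_neg, ← h2kneg]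
    constructor
    · intro h
      exact hcastinj _ _ (hposle v) (by omega) h
    · intro h
      rw [h]
  have hFadj : ∀ u v : V, H.Adj u v → F v = F u + 1 ∨ F u = F v + 1 := by
    intro u v h
    rcases hmain u v h with h' | h' | ⟨h1, h2⟩ | ⟨h1, h2⟩
    · right
      simp only [hFdef]
      rw [h', Nat.cast_add, Nat.cast_one]
      open Fin.CommRing in ring
    · left
      simp only [hFdef]
      rw [h', Nat.cast_add, Nat.cast_one]
      open Fin.CommRing in ring
    · left
      simp only [hFdef]
      rw [h1, h2, h2kneg, Nat.cast_zero]
      open Fin.CommRing in ring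
    · right
      simp only [hFdef]
      rw [h1, h2, h2kneg, Nat.cast_zero]
      open Fin.CommRing in ring
  have hv1 : ((1 : Fin (2 * k + 1))).val = 1 := by
    rw [show (1 : Fin (2 * k + 1)) = ((1 : ℕ) : Fin (2 * k + 1)) by norm_cast]
    exact Fin.val_cast_of_lt (by omega)
  refine ⟨⟨fun i => F ⁻¹' {i}, ?_, ?_, ?_, ?_, ?_⟩, ⟨⟨F, ?_⟩⟩⟩
  · ext v
    simp only [Set.mem_preimage, Set.mem_singleton_iff]
    rw [hF0 v]
    constructor
    · exact hunique0 v
    · rintro rfl; exact h0x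
  · ext v
    simp only [Set.mem_preimage, Set.mem_singleton_iff]
    rw [hF1 v]
    constructor
    · exact hunique2k v
    · rintro rfl; exact h2ky
  · intro i j hij
    rw [Set.disjoint_left]
    intro v hvi hvj
    simp only [Set.mem_preimage, Set.mem_singleton_iff] at hvi hvj
    exact hij (hvi ▸ hvj ▸ rfl)
  · ext v
    simp only [Set.mem_iUnion, Set.mem_preimage, Set.mem_singleton_iff, Set.mem_univ, iff_true]
    exact ⟨F v, rfl⟩
  · intro u v h
    rcases hFadj u v h with h' | h'
    · exact ⟨F u, Or.inl ⟨rfl, h'⟩⟩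
    · exact ⟨F v, Or.inr ⟨rfl, h'⟩⟩
  · intro a b hab
    rw [SimpleGraph.cycleGraph_adj']
    rcases hFadj a b hab with h' | h'
    · right
      rw [show F b - F a = 1 by rw [h']; open Fin.CommRing in ring]
      exact hv1
    · left
      rw [show F a - F b = 1 by rw [h']; open Fin.CommRing in ring]
      exact hv1
end

section
/- Let H be a graph on h vertices with chromatic number χ(H) = 3 that has a critical edge and contains a triangle. Then for every α > 0 there exists μ > 0 such that for every ε > 0 and every positive integer n, every n-vertex graph G with minimum degree δ(G) ≥ (1/3 + α)n that contains at least εn² pairwise edge-disjoint copies of H contains at least μ·ε·n^h labeled copies of H. (This yields δ_lin-rem(H) ≤ 1/3.) -/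
open SimpleGraph

open Finset

lemma aux_three_sets {V : Type} [Fintype V] [DecidableEq V] (A B C : Finset V) :
    A.card + B.card + C.card ≤ Fintype.card V + ((A ∩ B).card + ((A ∩ C).card + (B ∩ C).card)) := by
  have h1 := Finset.card_union_add_card_inter A B
  have h2 := Finset.card_union_add_card_inter (A ∪ B) C
  have h3 : ((A ∪ B) ∩ C).card ≤ (A ∩ C).card + (B ∩ C).card := by
    rw [Finset.union_inter_distrib_right]; exact Finset.card_union_le _ _
  have h4 : (A ∪ B ∪ C).card ≤ Fintype.card V := Finset.card_le_univ _
  omega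

lemma aux_funcount {ι V : Type} [Fintype ι] [DecidableEq ι] [Fintype V] [DecidableEq V]
    (T : Finset V) [DecidablePred fun g : ι → V => ∀ i, g i ∈ T] :
    (Finset.univ.filter fun g : ι → V => ∀ i, g i ∈ T).card = T.card ^ Fintype.card ι := by
  classical
  rw [← Fintype.card_subtype]
  rw [Fintype.card_congr (Equiv.subtypePiEquivPi (p := fun _ b => b ∈ T))]
  simp [Fintype.card_pi, Fintype.card_coe]

open scoped Classical in
lemma aux_pair_count {n h : ℕ} (G : SimpleGraph (Fin n)) (H : SimpleGraph (Fin h))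
    (x y : Fin h) (hxy : H.Adj x y) (c : Fin h → Fin 2)
    (hc : ∀ u v, H.Adj u v → s(u, v) ≠ s(x, y) → c u ≠ c v)
    (hcxy : c x = c y)
    (z : Fin h) (hzQ : c z ≠ c x)
    (α : ℝ) (hα : 0 < α)
    (hdeg : ∀ v : Fin n, (1/3 : ℝ) * n ≤ ((Finset.univ.filter (G.Adj v)).card : ℝ))
    (a b : Fin n) (hab : G.Adj a b)
    (hS : α * n ≤ (((Finset.univ.filter (G.Adj a)) ∩ (Finset.univ.filter (G.Adj b))).card : ℝ))
    (hn4 : 4 / α ≤ (n : ℝ)) :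
    (min (α/2) (1/3) : ℝ) ^ (h + h * h) * (n:ℝ) ^ (h - 2)
      ≤ ((Finset.univ.filter fun g : Fin h → Fin n =>
           g x = a ∧ g y = b ∧ Function.Injective g ∧
             ∀ u v, H.Adj u v → G.Adj (g u) (g v)).card : ℝ) + (h:ℝ)^2 * (n:ℝ) ^ (h - 3) := by
  have hN0 : (0:ℝ) < (n:ℝ) := lt_of_lt_of_le (by positivity) hn4
  have hxny : x ≠ y := hxy.ne
  -- the two classes
  set P' : Finset (Fin h) := Finset.univ.filter (fun w => c w = c x ∧ w ≠ x ∧ w ≠ y) with hP'def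
  set Q : Finset (Fin h) := Finset.univ.filter (fun w => c w ≠ c x) with hQdef
  have hxP' : x ∉ P' := by simp [hP'def]
  have hyP' : y ∉ P' := by simp [hP'def]
  have hxQ : x ∉ Q := by simp [hQdef]
  have hyQ : y ∉ Q := by simp [hQdef, hcxy]
  have hPQ : ∀ w, w ∈ P' → w ∉ Q := by
    intro w hw hwq
    rw [hP'def, Finset.mem_filter] at hw
    rw [hQdef, Finset.mem_filter] at hwq
    exact hwq.2 hw.2.1
  have hzQ' : z ∈ Q := by simp [hQdef, hzQ]
  have hQne : Q.card ≠ 0 := by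
    intro h0
    rw [Finset.card_eq_zero] at h0
    rw [h0] at hzQ'; exact absurd hzQ' (Finset.notMem_empty z)
  obtain ⟨k, hk⟩ := Nat.exists_eq_succ_of_ne_zero hQne
  -- cardinalities
  have hcardsplit : P'.card + Q.card + 2 = h := by
    have h1 : (Finset.univ.filter (fun w => c w = c x)).card
        + (Finset.univ.filter (fun w => ¬ c w = c x)).card = Fintype.card (Fin h) :=
      Finset.card_filter_add_card_filter_not _
    have h2 : (Finset.univ.filter (fun w => c w = c x)) = insert x (insert y P') := by
      ext w
      simp only [Finset.mem_filter, Finset.mem_univ, true_and, Finset.mem_insert, hP'def]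
      constructor
      · intro hw
        by_cases hwx : w = x
        · exact Or.inl hwx
        · by_cases hwy : w = y
          · exact Or.inr (Or.inl hwy)
          · exact Or.inr (Or.inr (by simp [hw, hwx, hwy]))
      · rintro (rfl | rfl | hw)
        · rfl
        · exact hcxy.symm
        · exact hw.1
    have h3 : (insert x (insert y P')).card = P'.card + 2 := by
      rw [Finset.card_insert_of_notMem (by simp [hxny, hxP']),
        Finset.card_insert_of_notMem hyP']
    have h4 : (Finset.univ.filter (fun w => ¬ c w = c x)) = Q := rfl
    rw [h2, h3, h4] at h1
    rw [Fintype.card_fin] at h1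
    omega
  have hh3 : 3 ≤ h := by omega
  -- the common neighbourhood
  set S : Finset (Fin n) :=
    ((Finset.univ.filter (G.Adj a)) ∩ (Finset.univ.filter (G.Adj b))) \ {a, b} with hSdef
  have hSmem : ∀ s ∈ S, G.Adj a s ∧ G.Adj b s ∧ s ≠ a ∧ s ≠ b := by
    intro s hs
    rw [hSdef, Finset.mem_sdiff, Finset.mem_inter, Finset.mem_filter, Finset.mem_filter] at hs
    refine ⟨hs.1.1.2, hs.1.2.2, ?_, ?_⟩ <;>
      · intro hh; apply hs.2; simp [hh]
  have hScard : α * (n:ℝ) / 2 ≤ (S.card : ℝ) := by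
    have h1 : ((Finset.univ.filter (G.Adj a)) ∩ (Finset.univ.filter (G.Adj b))).card
        ≤ S.card + 2 := by
      have h2 := Finset.card_sdiff_add_card_inter
        ((Finset.univ.filter (G.Adj a)) ∩ (Finset.univ.filter (G.Adj b))) ({a, b} : Finset (Fin n))
      rw [← hSdef] at h2
      have h3 : (((Finset.univ.filter (G.Adj a)) ∩ (Finset.univ.filter (G.Adj b))) ∩ ({a,b} : Finset (Fin n))).card ≤ 2 := by
        refine le_trans (Finset.card_le_card (Finset.inter_subset_right)) ?_
        exact le_trans (Finset.card_insert_le _ _) (by simp)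
      omega
    have h1' : (((Finset.univ.filter (G.Adj a)) ∩ (Finset.univ.filter (G.Adj b))).card : ℝ)
        ≤ (S.card : ℝ) + 2 := by exact_mod_cast h1
    have h2 : α * n / 2 + 2 ≤ α * n := by
      have : 4 ≤ α * n := by
        rw [div_le_iff₀ hα] at hn4
        linarith [hn4]
      linarith
    linarith
  -- the candidate-set map
  set T : ({p // p ∈ P'} → Fin n) → Finset (Fin n) :=
    fun gp => S.filter (fun s => ∀ p : {p // p ∈ P'}, G.Adj (gp p) s) with hTdef
  -- step A : counting sum of |T gp|
  have stepA : ∑ gp : {p // p ∈ P'} → Fin n, (T gp).card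
      = ∑ s ∈ S, (Finset.univ.filter (fun w => G.Adj s w)).card ^ P'.card := by
    have h1 : ∀ gp : {p // p ∈ P'} → Fin n, (T gp).card
        = ∑ s ∈ S, if (∀ p : {p // p ∈ P'}, G.Adj (gp p) s) then 1 else 0 := by
      intro gp; rw [hTdef]; exact Finset.card_filter _ _
    rw [Finset.sum_congr rfl (fun gp _ => h1 gp), Finset.sum_comm]
    refine Finset.sum_congr rfl (fun s hs => ?_)
    rw [← Finset.card_filter]
    have h2 := aux_funcount (ι := {p // p ∈ P'}) (V := Fin n)
      (Finset.univ.filter (fun w => G.Adj s w))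
    rw [Fintype.card_coe] at h2
    rw [← h2]
    congr 1
    apply Finset.filter_congr
    intro g _
    constructor
    · intro hg p
      simp only [Finset.mem_filter, Finset.mem_univ, true_and]
      exact (hg p).symm
    · intro hg p
      have := hg p
      simp only [Finset.mem_filter, Finset.mem_univ, true_and] at this
      exact this.symm
  -- step B : real lower bound for the sum
  have stepB : (S.card : ℝ) * ((1:ℝ)/3 * (n:ℝ)) ^ P'.card
      ≤ ∑ gp : {p // p ∈ P'} → Fin n, ((T gp).card : ℝ) := by
    have hc1 : (∑ gp : {p // p ∈ P'} → Fin n, ((T gp).card : ℝ))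
        = ((∑ gp : {p // p ∈ P'} → Fin n, (T gp).card : ℕ) : ℝ) := by
      push_cast; rfl
    rw [hc1, stepA]
    push_cast
    have h3 : ∀ s ∈ S, ((1:ℝ)/3 * (n:ℝ)) ^ P'.card
        ≤ ((Finset.univ.filter (fun w => G.Adj s w)).card : ℝ) ^ P'.card := by
      intro s hs
      exact pow_le_pow_left₀ (by positivity) (hdeg s) _
    have h4 := Finset.card_nsmul_le_sum S
      (fun s => ((Finset.univ.filter (fun w => G.Adj s w)).card : ℝ) ^ P'.card)
      (((1:ℝ)/3 * (n:ℝ)) ^ P'.card) h3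
    rw [nsmul_eq_mul] at h4
    exact h4
  -- the pair set
  set Pair : Finset (({p // p ∈ P'} → Fin n) × ({q // q ∈ Q} → Fin n)) :=
    Finset.univ.filter (fun gz => ∀ q : {q // q ∈ Q}, gz.2 q ∈ T gz.1) with hPairdef
  have stepC : Pair.card = ∑ gp : {p // p ∈ P'} → Fin n, (T gp).card ^ Q.card := by
    rw [Finset.card_eq_sum_card_fiberwise (f := Prod.fst)
      (t := Finset.univ) (fun z _ => Finset.mem_univ _)]
    refine Finset.sum_congr rfl (fun gp _ => ?_)
    have himg : Pair.filter (fun z => z.1 = gp)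
        = (Finset.univ.filter fun gq : {q // q ∈ Q} → Fin n => ∀ q, gq q ∈ T gp).image
            (fun gq => (gp, gq)) := by
      ext w
      obtain ⟨w1, w2⟩ := w
      simp only [Finset.mem_filter, Finset.mem_image, Finset.mem_univ, true_and, hPairdef]
      constructor
      · rintro ⟨hcond, h1⟩
        subst h1
        exact ⟨w2, hcond, rfl⟩
      · rintro ⟨gq, hgq, h2⟩
        rw [Prod.mk.injEq] at h2
        obtain ⟨h2a, h2b⟩ := h2
        subst h2a; subst h2b
        exact ⟨hgq, rfl⟩
    rw [himg, Finset.card_image_of_injective _ (fun u v huv => by simpa using huv)]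
    have h2 := aux_funcount (ι := {q // q ∈ Q}) (V := Fin n) (T gp)
    rw [Fintype.card_coe] at h2
    exact h2
  -- the weak configuration set
  set Wk : Finset (Fin h → Fin n) :=
    Finset.univ.filter (fun g => g x = a ∧ g y = b ∧ (∀ w ∈ Q, g w ∈ S) ∧
      ∀ p ∈ P', ∀ q ∈ Q, G.Adj (g p) (g q)) with hWkdef
  have stepD : Pair.card ≤ Wk.card := by
    apply Finset.card_le_card_of_injOn
      (fun gz w => if hw : w ∈ P' then gz.1 ⟨w, hw⟩ else if hq : w ∈ Q then gz.2 ⟨w, hq⟩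
        else if w = x then a else b)
    · intro gz hgz
      rw [Finset.mem_coe, hPairdef, Finset.mem_filter] at hgz
      have hcond := hgz.2
      rw [Finset.mem_coe, hWkdef, Finset.mem_filter]
      refine ⟨Finset.mem_univ _, ?_, ?_, ?_, ?_⟩
      · dsimp only
        rw [dif_neg hxP', dif_neg hxQ, if_pos rfl]
      · dsimp only
        rw [dif_neg hyP', dif_neg hyQ, if_neg (Ne.symm hxny)]
      · intro w hw
        dsimp only
        rw [dif_neg (fun hp => hPQ w hp hw), dif_pos hw]
        have := hcond ⟨w, hw⟩
        rw [hTdef] at this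
        exact Finset.mem_of_mem_filter _ this
      · intro p hp q hq
        dsimp only
        rw [dif_pos hp, dif_neg (fun hp' => hPQ q hp' hq), dif_pos hq]
        have := hcond ⟨q, hq⟩
        rw [hTdef, Finset.mem_filter] at this
        exact this.2 ⟨p, hp⟩
    · intro g1 hg1 g2 hg2 heq
      have heq' := congrFun heq
      refine Prod.ext ?_ ?_
      · funext p
        have := heq' p.1
        dsimp only at this
        rw [dif_pos p.2, dif_pos p.2] at this
        simpa using this
      · funext q
        have := heq' q.1
        dsimp only at this
        rw [dif_neg (fun hp' => hPQ q.1 hp' q.2), dif_neg (fun hp' => hPQ q.1 hp' q.2),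
          dif_pos q.2, dif_pos q.2] at this
        simpa using this
  -- the bad set
  set Bad : Finset (Fin h → Fin n) :=
    Finset.univ.filter (fun g => g x = a ∧ g y = b ∧ ¬ Function.Injective g) with hBaddef
  have stepE : Bad.card ≤ h ^ 2 * n ^ (h - 3) := by
    set pairs : Finset (Fin h × Fin h) :=
      Finset.univ.filter (fun ww => ww.1 ≠ ww.2 ∧ ww.1 ≠ x ∧ ww.1 ≠ y) with hpairsdef
    have hsub : Bad ⊆ pairs.biUnion (fun ww =>
        Finset.univ.filter (fun g : Fin h → Fin n => g x = a ∧ g y = b ∧ g ww.1 = g ww.2)) := by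
      intro g hg
      rw [hBaddef, Finset.mem_filter] at hg
      obtain ⟨-, hga, hgb, hgni⟩ := hg
      rw [Function.not_injective_iff] at hgni
      obtain ⟨u, v, huv, hune⟩ := hgni
      rw [Finset.mem_biUnion]
      by_cases hu : u ≠ x ∧ u ≠ y
      · exact ⟨(u, v), by simp [hpairsdef, hune, hu.1, hu.2],
          by simp [hga, hgb, huv]⟩
      · by_cases hv : v ≠ x ∧ v ≠ y
        · exact ⟨(v, u), by simp [hpairsdef, Ne.symm hune, hv.1, hv.2],
            by simp [hga, hgb, huv.symm]⟩
        · exfalso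
          push_neg at hu hv
          have hu' : u = x ∨ u = y := by
            by_cases h1 : u = x
            · exact Or.inl h1
            · exact Or.inr (hu h1)
          have hv' : v = x ∨ v = y := by
            by_cases h1 : v = x
            · exact Or.inl h1
            · exact Or.inr (hv h1)
          have hgxy : g x = g y := by
            rcases hu' with rfl | rfl <;> rcases hv' with rfl | rfl
            · exact absurd rfl hune
            · exact huv
            · exact huv.symm
            · exact absurd rfl hune
          rw [hga, hgb] at hgxy
          exact G.ne_of_adj hab hgxy
    refine le_trans (Finset.card_le_card hsub) (le_trans Finset.card_biUnion_le ?_)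
    have hone : ∀ ww ∈ pairs,
        (Finset.univ.filter fun g : Fin h → Fin n =>
          g x = a ∧ g y = b ∧ g ww.1 = g ww.2).card ≤ n ^ (h - 3) := by
      rintro ⟨w1, w2⟩ hww
      rw [hpairsdef, Finset.mem_filter] at hww
      obtain ⟨-, hne12, hnx, hny⟩ := hww
      have hD3 : ({x, y, w1} : Finset (Fin h)).card = 3 := by
        rw [Finset.card_insert_of_notMem (by simp [hxny, Ne.symm hnx]),
          Finset.card_insert_of_notMem (by simp [Ne.symm hny])]
        simp
      have hcompl : (({x, y, w1} : Finset (Fin h))ᶜ).card = h - 3 := by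
        rw [Finset.card_compl, hD3, Fintype.card_fin]
      have htarget : (Finset.univ :
          Finset ({w // w ∈ (({x, y, w1} : Finset (Fin h))ᶜ)} → Fin n)).card = n ^ (h - 3) := by
        rw [Finset.card_univ, Fintype.card_fun, Fintype.card_coe, hcompl, Fintype.card_fin]
      rw [← htarget]
      apply Finset.card_le_card_of_injOn (fun g u => g u.1) (fun g hg => Finset.mem_univ _)
      intro g1 hg1 g2 hg2 heq
      rw [Finset.mem_coe, Finset.mem_filter] at hg1 hg2
      obtain ⟨-, h1a, h1b, h1w⟩ := hg1
      obtain ⟨-, h2a, h2b, h2w⟩ := hg2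
      have heval : ∀ (u : Fin h) (hu : u ∈ (({x, y, w1} : Finset (Fin h))ᶜ)), g1 u = g2 u := by
        intro u hu
        exact congrFun heq ⟨u, hu⟩
      have hw2val : g1 w2 = g2 w2 := by
        by_cases h2x : w2 = x
        · rw [h2x, h1a, h2a]
        · by_cases h2y : w2 = y
          · rw [h2y, h1b, h2b]
          · exact heval w2 (by simp [h2x, h2y, Ne.symm hne12])
      funext u
      by_cases hu : u ∈ (({x, y, w1} : Finset (Fin h))ᶜ)
      · exact heval u hu
      · rw [Finset.mem_compl, not_not] at hu
        rw [Finset.mem_insert, Finset.mem_insert, Finset.mem_singleton] at hu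
        rcases hu with rfl | rfl | rfl
        · rw [h1a, h2a]
        · rw [h1b, h2b]
        · rw [h1w, h2w, hw2val]
    refine le_trans (Finset.sum_le_card_nsmul pairs _ _ hone) ?_
    rw [smul_eq_mul]
    have hpc : pairs.card ≤ h ^ 2 := by
      refine le_trans (Finset.card_le_univ _) ?_
      rw [Fintype.card_prod, Fintype.card_fin, pow_two]
    exact Nat.mul_le_mul_right _ hpc
  -- the configuration set
  set Cfg : Finset (Fin h → Fin n) :=
    Finset.univ.filter (fun g : Fin h → Fin n => g x = a ∧ g y = b ∧ Function.Injective g ∧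
      ∀ u v, H.Adj u v → G.Adj (g u) (g v)) with hCfgdef
  have stepF : Wk ⊆ Cfg ∪ Bad := by
    intro g hg
    rw [hWkdef, Finset.mem_filter] at hg
    obtain ⟨-, hga, hgb, hgQ, hgadj⟩ := hg
    by_cases hinj : Function.Injective g
    · rw [Finset.mem_union]
      left
      rw [hCfgdef, Finset.mem_filter]
      refine ⟨Finset.mem_univ _, hga, hgb, hinj, ?_⟩
      intro u v huv
      by_cases he : s(u, v) = s(x, y)
      · rw [Sym2.eq_iff] at he
        rcases he with ⟨rfl, rfl⟩ | ⟨rfl, rfl⟩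
        · rw [hga, hgb]; exact hab
        · rw [hga, hgb]; exact hab.symm
      · have hcuv := hc u v huv he
        have key : ∀ u' v', H.Adj u' v' → c u' = c x → c v' ≠ c x →
            G.Adj (g u') (g v') := by
          intro u' v' hadj hcu hcv
          have hvQ : v' ∈ Q := by simp [hQdef, hcv]
          by_cases hux : u' = x
          · subst hux; rw [hga]; exact (hSmem _ (hgQ v' hvQ)).1
          · by_cases huy : u' = y
            · subst huy; rw [hgb]; exact (hSmem _ (hgQ v' hvQ)).2.1
            · exact hgadj u' (by simp [hP'def, hcu, hux, huy]) v' hvQ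
        by_cases hcu : c u = c x
        · exact key u v huv hcu (fun hcv => hcuv (hcu.trans hcv.symm))
        · have hcv : c v = c x := by
            have hfin2 : ∀ p q r : Fin 2, p ≠ q → ¬ p = r → q = r := by decide
            exact hfin2 (c u) (c v) (c x) hcuv hcu
          exact (key v u huv.symm hcv hcu).symm
    · rw [Finset.mem_union]
      right
      rw [hBaddef, Finset.mem_filter]
      exact ⟨Finset.mem_univ _, hga, hgb, hinj⟩
  have stepG : Wk.card ≤ Cfg.card + Bad.card :=
    le_trans (Finset.card_le_card stepF) (Finset.card_union_le _ _)
  -- real-number assembly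
  set β : ℝ := min (α/2) (1/3) with hβdef
  have hβ0 : 0 ≤ β := le_min (by positivity) (by norm_num)
  have hβ1 : β ≤ 1 := le_trans (min_le_right _ _) (by norm_num)
  have hUcard : (((Finset.univ : Finset ({p // p ∈ P'} → Fin n)).card : ℕ) : ℝ)
      = (n:ℝ) ^ P'.card := by
    rw [Finset.card_univ, Fintype.card_fun, Fintype.card_coe, Fintype.card_fin]
    push_cast
    rfl
  have jens := pow_sum_div_card_le_sum_pow
    (s := (Finset.univ : Finset ({p // p ∈ P'} → Fin n)))
    (f := fun gp => ((T gp).card : ℝ)) (fun i _ => Nat.cast_nonneg _) k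
  rw [hUcard] at jens
  have hWR : (∑ gp : {p // p ∈ P'} → Fin n, ((T gp).card : ℝ) ^ (k+1)) ≤ (Wk.card : ℝ) := by
    have h5 : (Pair.card : ℝ) = ∑ gp : {p // p ∈ P'} → Fin n, ((T gp).card : ℝ) ^ (k+1) := by
      rw [stepC, hk]
      push_cast
      rfl
    rw [← h5]
    exact_mod_cast stepD
  have hexp1 : (n:ℝ)^(h-2) * (((n:ℝ)^P'.card)^k) = (n:ℝ)^((P'.card + 1) * (k+1)) := by
    rw [← pow_mul, ← pow_add]
    congr 1
    have hh2 : h - 2 = P'.card + k + 1 := by omega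
    rw [hh2]
    ring
  have hcoef : β^(h + h*h) ≤ (α/2)^(k+1) * ((1:ℝ)/3)^(P'.card*(k+1)) := by
    have hle : (P'.card + 1) * (k+1) ≤ h + h*h := by
      have h1 : P'.card + 1 ≤ h := by omega
      have h2 : k + 1 ≤ h := by omega
      calc (P'.card + 1) * (k+1) ≤ h * h := Nat.mul_le_mul h1 h2
        _ ≤ h + h*h := Nat.le_add_left _ _
    calc β^(h + h*h) ≤ β^((P'.card + 1) * (k+1)) := pow_le_pow_of_le_one hβ0 hβ1 hle
      _ = β^(k+1) * β^(P'.card*(k+1)) := by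
          rw [← pow_add]
          congr 1
          ring
      _ ≤ (α/2)^(k+1) * ((1:ℝ)/3)^(P'.card*(k+1)) := by
          apply mul_le_mul
          · exact pow_le_pow_left₀ hβ0 (min_le_left _ _) _
          · exact pow_le_pow_left₀ hβ0 (min_le_right _ _) _
          · positivity
          · positivity
  have hident : ((α/2*(n:ℝ)) * ((1:ℝ)/3*(n:ℝ))^P'.card)^(k+1)
      = ((α/2)^(k+1) * ((1:ℝ)/3)^(P'.card*(k+1))) * (n:ℝ)^((P'.card + 1) * (k+1)) := by
    rw [show ((P'.card + 1) * (k+1)) = (k+1) + P'.card * (k+1) by ring]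
    rw [pow_add]
    ring
  have hSc : (α/2) * (n:ℝ) ≤ (S.card : ℝ) := by
    have : α * (n:ℝ) / 2 = α/2 * (n:ℝ) := by ring
    linarith [hScard]
  have hpow : ((S.card:ℝ) * ((1:ℝ)/3*(n:ℝ))^P'.card)^(k+1)
      ≤ (∑ gp : {p // p ∈ P'} → Fin n, ((T gp).card : ℝ))^(k+1) :=
    pow_le_pow_left₀ (mul_nonneg (Nat.cast_nonneg _) (by positivity)) stepB _
  have hpow2 : ((α/2*(n:ℝ)) * ((1:ℝ)/3*(n:ℝ))^P'.card)^(k+1)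
      ≤ ((S.card:ℝ) * ((1:ℝ)/3*(n:ℝ))^P'.card)^(k+1) := by
    apply pow_le_pow_left₀ (by positivity)
    apply mul_le_mul_of_nonneg_right hSc (by positivity)
  have hdenpos : (0:ℝ) < ((n:ℝ)^P'.card)^k := by positivity
  have hmain : β^(h + h*h) * (n:ℝ)^(h-2) ≤ (Wk.card : ℝ) := by
    have hdiv : β^(h + h*h) * (n:ℝ)^(h-2)
        ≤ ((S.card:ℝ) * ((1:ℝ)/3*(n:ℝ))^P'.card)^(k+1) / (((n:ℝ)^P'.card)^k) := by
      rw [le_div_iff₀ hdenpos]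
      calc β^(h + h*h) * (n:ℝ)^(h-2) * (((n:ℝ)^P'.card)^k)
          = β^(h + h*h) * (n:ℝ)^((P'.card + 1) * (k+1)) := by
            rw [mul_assoc, hexp1]
        _ ≤ ((α/2)^(k+1) * ((1:ℝ)/3)^(P'.card*(k+1))) * (n:ℝ)^((P'.card + 1) * (k+1)) := by
            apply mul_le_mul_of_nonneg_right hcoef (by positivity)
        _ = ((α/2*(n:ℝ)) * ((1:ℝ)/3*(n:ℝ))^P'.card)^(k+1) := hident.symm
        _ ≤ ((S.card:ℝ) * ((1:ℝ)/3*(n:ℝ))^P'.card)^(k+1) := hpow2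
    refine le_trans hdiv (le_trans ?_ (le_trans jens hWR))
    exact (div_le_div_iff_of_pos_right hdenpos).mpr hpow
  have hBadR : (Bad.card : ℝ) ≤ (h:ℝ)^2 * (n:ℝ)^(h-3) := by
    have := stepE
    have h6 : ((Bad.card : ℕ) : ℝ) ≤ ((h ^ 2 * n ^ (h - 3) : ℕ) : ℝ) := by exact_mod_cast this
    push_cast at h6
    exact h6
  have hWkR : (Wk.card : ℝ) ≤ (Cfg.card : ℝ) + (Bad.card : ℝ) := by exact_mod_cast stepG
  calc β ^ (h + h*h) * (n:ℝ)^(h-2) ≤ (Wk.card : ℝ) := hmain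
    _ ≤ (Cfg.card : ℝ) + (Bad.card : ℝ) := hWkR
    _ ≤ (Cfg.card : ℝ) + (h:ℝ)^2 * (n:ℝ)^(h-3) := by linarith

set_option maxHeartbeats 1000000 in
open scoped Classical in
theorem stmt_12 (h : ℕ) (H : SimpleGraph (Fin h)) (hχ : H.chromaticNumber = 3)
    (hcrit : ∃ x y : Fin h, H.Adj x y ∧
      (H.deleteEdges {s(x, y)}).chromaticNumber < H.chromaticNumber)
    (htri : HasCopy (cycleGraph 3) H)
    (α : ℝ) (hα : 0 < α) :
    ∃ μ : ℝ, 0 < μ ∧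
      ∀ ε : ℝ, 0 < ε → ∀ n : ℕ, 0 < n → ∀ G : SimpleGraph (Fin n),
        (∀ v, (1 / 3 + α) * n ≤ (Nat.card (G.neighborSet v) : ℝ)) →
        (∃ m : ℕ, ε * n ^ 2 ≤ (m : ℝ) ∧ HasEdgeDisjointCopies H G m) →
        μ * ε * (n : ℝ) ^ h ≤ (_root_.copyCount H G : ℝ) := by
  classical
  obtain ⟨x, y, hxy, hlt⟩ := hcrit
  rw [hχ] at hlt
  have hcol2 : (H.deleteEdges {s(x, y)}).Colorable 2 := by
    rw [← SimpleGraph.chromaticNumber_le_iff_colorable]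
    have h3 : (3 : ℕ∞) = (2 : ℕ∞) + 1 := by norm_num
    rw [h3] at hlt
    have := Order.le_of_lt_add_one hlt
    exact_mod_cast this
  obtain ⟨C⟩ := hcol2
  set c : Fin h → Fin 2 := fun w => C w with hcdef
  have hc : ∀ u v, H.Adj u v → s(u, v) ≠ s(x, y) → c u ≠ c v := by
    intro u v huv hne
    apply C.valid
    rw [SimpleGraph.deleteEdges_adj]
    exact ⟨huv, by simpa using hne⟩
  obtain ⟨t, tinj⟩ := htri
  have tadj : ∀ i j : Fin 3, i ≠ j → H.Adj (t i) (t j) := by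
    intro i j hij
    apply t.map_adj
    rw [SimpleGraph.cycleGraph_three_eq_top]
    exact hij
  have hz : ∃ z, H.Adj x z ∧ H.Adj y z := by
    by_cases h01 : s(t 0, t 1) = s(x, y)
    · rw [Sym2.eq_iff] at h01
      rcases h01 with ⟨h1, h2⟩ | ⟨h1, h2⟩
      · exact ⟨t 2, by rw [← h1]; exact tadj 0 2 (by decide),
          by rw [← h2]; exact tadj 1 2 (by decide)⟩
      · exact ⟨t 2, by rw [← h2]; exact tadj 1 2 (by decide),
          by rw [← h1]; exact tadj 0 2 (by decide)⟩
    · by_cases h02 : s(t 0, t 2) = s(x, y)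
      · rw [Sym2.eq_iff] at h02
        rcases h02 with ⟨h1, h2⟩ | ⟨h1, h2⟩
        · exact ⟨t 1, by rw [← h1]; exact tadj 0 1 (by decide),
            by rw [← h2]; exact tadj 2 1 (by decide)⟩
        · exact ⟨t 1, by rw [← h2]; exact tadj 2 1 (by decide),
            by rw [← h1]; exact tadj 0 1 (by decide)⟩
      · by_cases h12 : s(t 1, t 2) = s(x, y)
        · rw [Sym2.eq_iff] at h12
          rcases h12 with ⟨h1, h2⟩ | ⟨h1, h2⟩
          · exact ⟨t 0, by rw [← h1]; exact tadj 1 0 (by decide),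
              by rw [← h2]; exact tadj 2 0 (by decide)⟩
          · exact ⟨t 0, by rw [← h2]; exact tadj 2 0 (by decide),
              by rw [← h1]; exact tadj 1 0 (by decide)⟩
        · exfalso
          have d01 : c (t 0) ≠ c (t 1) := hc _ _ (tadj 0 1 (by decide)) h01
          have d02 : c (t 0) ≠ c (t 2) := hc _ _ (tadj 0 2 (by decide)) h02
          have d12 : c (t 1) ≠ c (t 2) := hc _ _ (tadj 1 2 (by decide)) h12
          have hfin : ∀ p q r : Fin 2, p ≠ q → p ≠ r → q ≠ r → False := by decide
          exact hfin _ _ _ d01 d02 d12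
  obtain ⟨z, hzx, hzy⟩ := hz
  have hxz2 : s(x, z) ≠ s(x, y) := by
    intro heq
    rcases Sym2.eq_iff.mp heq with ⟨-, h2⟩ | ⟨h1, -⟩
    · exact hzy.ne h2.symm
    · exact hxy.ne h1
  have hyz2 : s(y, z) ≠ s(x, y) := by
    intro heq
    rcases Sym2.eq_iff.mp heq with ⟨h1, -⟩ | ⟨-, h2⟩
    · exact hxy.ne h1.symm
    · exact hzx.ne h2.symm
  have hcxz : c x ≠ c z := hc x z hzx hxz2
  have hcyz : c y ≠ c z := hc y z hzy hyz2
  have hcxy : c x = c y := by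
    have h2 : ∀ p q r : Fin 2, p ≠ r → q ≠ r → p = q := by decide
    exact h2 _ _ _ hcxz hcyz
  have hzQ : c z ≠ c x := fun hh => hcxz hh.symm
  have hh3 : 3 ≤ h := by
    have h1 := Finset.card_le_univ ({x, y, z} : Finset (Fin h))
    rw [Fintype.card_fin] at h1
    rw [Finset.card_insert_of_notMem (by simp [hxy.ne, hzx.ne]),
      Finset.card_insert_of_notMem (by simp [hzy.ne]), Finset.card_singleton] at h1
    exact h1
  -- constants
  set β : ℝ := min (α/2) (1/3) with hβdef
  have hβpos : 0 < β := lt_min (by positivity) (by norm_num)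
  set c₀ : ℝ := β ^ (h + h * h) with hc₀def
  have hc₀pos : 0 < c₀ := pow_pos hβpos _
  set n₀ : ℝ := max (max (4/α) ((4 * (h:ℝ)^2)/c₀)) 1 with hn₀def
  have hn₀1 : (1:ℝ) ≤ n₀ := le_max_right _ _
  have hn₀pos : (0:ℝ) < n₀ := lt_of_lt_of_le one_pos hn₀1
  set μ : ℝ := min (c₀/2) (1/n₀^h) with hμdef
  have hμpos : 0 < μ := lt_min (by positivity) (by positivity)
  refine ⟨μ, hμpos, ?_⟩
  intro ε hε n hn G hmin hex
  obtain ⟨m, hm, f, hfinj, hdisj⟩ := hex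
  -- degree conversions
  have hdegF : ∀ v, (1/3 + α) * n ≤ ((Finset.univ.filter (G.Adj v)).card : ℝ) := by
    intro v
    have h1 := hmin v
    have h2 : Nat.card ↥(G.neighborSet v) = (Finset.univ.filter (G.Adj v)).card := by
      rw [Nat.card_eq_fintype_card, Fintype.card_subtype]
      congr 1
    rw [h2] at h1
    exact h1
  have hdeg3 : ∀ v, (1/3 : ℝ) * n ≤ ((Finset.univ.filter (G.Adj v)).card : ℝ) := by
    intro v
    refine le_trans ?_ (hdegF v)
    have : (0:ℝ) ≤ (n:ℝ) := Nat.cast_nonneg n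
    nlinarith
  -- copyCount ≥ m
  have hfinite : Finite (H →g G) :=
    Finite.of_injective (fun φ => (φ : Fin h → Fin n)) DFunLike.coe_injective
  haveI : Finite {φ : H →g G // Function.Injective ⇑φ} := Subtype.finite
  have hfne : ∀ i j, f i = f j → i = j := by
    intro i j hij
    by_contra hne
    have hd := hdisj hne
    have hmem1 : Sym2.map (f i) s(x, y) ∈ copyEdges H (f i) :=
      ⟨s(x, y), H.mem_edgeSet.mpr hxy, rfl⟩
    have hmem2 : Sym2.map (f i) s(x, y) ∈ copyEdges H (f j) := by
      rw [hij]
      exact ⟨s(x, y), H.mem_edgeSet.mpr hxy, rfl⟩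
    exact Set.disjoint_left.mp hd hmem1 hmem2
  have hmcc : m ≤ _root_.copyCount H G := by
    have hinj : Function.Injective
        (fun i => (⟨f i, hfinj i⟩ : {φ : H →g G // Function.Injective ⇑φ})) := by
      intro i j hij
      exact hfne i j (congrArg Subtype.val hij)
    have := Nat.card_le_card_of_injective _ hinj
    simpa [_root_.copyCount, Nat.card_eq_fintype_card] using this
  -- good pair selection
  have hsel : ∀ i : Fin m, ∃ p : Fin n × Fin n,
      (G.Adj p.1 p.2 ∧ α * n ≤ (((Finset.univ.filter (G.Adj p.1)) ∩
        (Finset.univ.filter (G.Adj p.2))).card : ℝ)) ∧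
      s(p.1, p.2) ∈ copyEdges H (f i) := by
    intro i
    by_contra hno
    push_neg at hno
    have huv : G.Adj (f i x) (f i y) := (f i).map_adj hxy
    have huw : G.Adj (f i x) (f i z) := (f i).map_adj hzx
    have hvw : G.Adj (f i y) (f i z) := (f i).map_adj hzy
    have e1 : s(f i x, f i y) ∈ copyEdges H (f i) := ⟨s(x, y), H.mem_edgeSet.mpr hxy, rfl⟩
    have e2 : s(f i x, f i z) ∈ copyEdges H (f i) := ⟨s(x, z), H.mem_edgeSet.mpr hzx, rfl⟩
    have e3 : s(f i y, f i z) ∈ copyEdges H (f i) := ⟨s(y, z), H.mem_edgeSet.mpr hzy, rfl⟩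
    have g1 : (((Finset.univ.filter (G.Adj (f i x))) ∩
        (Finset.univ.filter (G.Adj (f i y)))).card : ℝ) < α * n := by
      by_contra hle
      push_neg at hle
      exact hno (f i x, f i y) ⟨huv, hle⟩ e1
    have g2 : (((Finset.univ.filter (G.Adj (f i x))) ∩
        (Finset.univ.filter (G.Adj (f i z)))).card : ℝ) < α * n := by
      by_contra hle
      push_neg at hle
      exact hno (f i x, f i z) ⟨huw, hle⟩ e2
    have g3 : (((Finset.univ.filter (G.Adj (f i y))) ∩
        (Finset.univ.filter (G.Adj (f i z)))).card : ℝ) < α * n := by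
      by_contra hle
      push_neg at hle
      exact hno (f i y, f i z) ⟨hvw, hle⟩ e3
    have hie := aux_three_sets (Finset.univ.filter (G.Adj (f i x)))
      (Finset.univ.filter (G.Adj (f i y))) (Finset.univ.filter (G.Adj (f i z)))
    rw [Fintype.card_fin] at hie
    have hieR := (Nat.cast_le (α := ℝ)).mpr hie
    push_cast at hieR
    have d1 := hdegF (f i x)
    have d2 := hdegF (f i y)
    have d3 := hdegF (f i z)
    have hnn : (0:ℝ) ≤ (n:ℝ) := Nat.cast_nonneg n
    linarith [g1, g2, g3, d1, d2, d3, hieR, hnn]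
  by_cases hbig : n₀ ≤ (n:ℝ)
  · -- large n
    have hn4 : 4 / α ≤ (n:ℝ) := le_trans (le_trans (le_max_left _ _) (le_max_left _ _)) hbig
    choose pair hgood hmemE using hsel
    have hpinj : Function.Injective pair := by
      intro i j hij
      by_contra hne
      have hd := hdisj hne
      have h1 := hmemE i
      rw [hij] at h1
      exact Set.disjoint_left.mp hd h1 (hmemE j)
    set Dord : Finset (Fin n × Fin n) := Finset.univ.filter (fun p =>
      G.Adj p.1 p.2 ∧ α * n ≤ (((Finset.univ.filter (G.Adj p.1)) ∩
        (Finset.univ.filter (G.Adj p.2))).card : ℝ)) with hDorddef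
    have hDm : m ≤ Dord.card := by
      have himg : (Finset.univ : Finset (Fin m)).image pair ⊆ Dord := by
        intro p hp
        rw [Finset.mem_image] at hp
        obtain ⟨i, -, rfl⟩ := hp
        rw [hDorddef, Finset.mem_filter]
        exact ⟨Finset.mem_univ _, hgood i⟩
      calc m = ((Finset.univ : Finset (Fin m)).image pair).card := by
            rw [Finset.card_image_of_injective _ hpinj, Finset.card_univ, Fintype.card_fin]
        _ ≤ Dord.card := Finset.card_le_card himg
    set CfgF : Fin n × Fin n → Finset (Fin h → Fin n) := fun p =>
      Finset.univ.filter (fun g : Fin h → Fin n => g x = p.1 ∧ g y = p.2 ∧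
        Function.Injective g ∧ ∀ u v, H.Adj u v → G.Adj (g u) (g v)) with hCfgFdef
    set Homs : Finset (Fin h → Fin n) := Finset.univ.filter (fun g : Fin h → Fin n =>
      Function.Injective g ∧ ∀ u v, H.Adj u v → G.Adj (g u) (g v)) with hHomsdef
    have hsubH : Dord.biUnion CfgF ⊆ Homs := by
      intro g hg
      rw [Finset.mem_biUnion] at hg
      obtain ⟨p, -, hgp⟩ := hg
      rw [hCfgFdef] at hgp
      rw [Finset.mem_filter] at hgp
      rw [hHomsdef, Finset.mem_filter]
      exact ⟨Finset.mem_univ _, hgp.2.2.2.1, hgp.2.2.2.2⟩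
    have hdisjC : ∀ p ∈ Dord, ∀ q ∈ Dord, p ≠ q → Disjoint (CfgF p) (CfgF q) := by
      intro p _ q _ hpq
      rw [Finset.disjoint_left]
      intro g hg1 hg2
      rw [hCfgFdef, Finset.mem_filter] at hg1
      rw [hCfgFdef, Finset.mem_filter] at hg2
      exact hpq (Prod.ext (hg1.2.1.symm.trans hg2.2.1) (hg1.2.2.1.symm.trans hg2.2.2.1))
    have hcardsum : ∑ p ∈ Dord, (CfgF p).card = (Dord.biUnion CfgF).card :=
      (Finset.card_biUnion hdisjC).symm
    have hper : ∀ p ∈ Dord, (c₀/2) * (n:ℝ)^(h-2) ≤ ((CfgF p).card : ℝ) := by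
      intro p hp
      rw [hDorddef, Finset.mem_filter] at hp
      obtain ⟨-, hadj, hcodeg⟩ := hp
      have hbase := aux_pair_count G H x y hxy c hc hcxy z hzQ α hα hdeg3 p.1 p.2 hadj hcodeg hn4
      rw [← hβdef, ← hc₀def] at hbase
      have hsmall : (h:ℝ)^2 * (n:ℝ)^(h-3) ≤ (c₀/2) * (n:ℝ)^(h-2) := by
        have hpow : (n:ℝ)^(h-2) = (n:ℝ)^(h-3) * (n:ℝ) := by
          rw [← pow_succ]
          congr 1
          omega
        have hn2 : (4 * (h:ℝ)^2)/c₀ ≤ (n:ℝ) :=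
          le_trans (le_trans (le_max_right _ _) (le_max_left _ _)) hbig
        have hc2 : (h:ℝ)^2 ≤ (c₀/2) * (n:ℝ) := by
          rw [div_le_iff₀ hc₀pos] at hn2
          nlinarith [hc₀pos, hn2]
        calc (h:ℝ)^2 * (n:ℝ)^(h-3) ≤ ((c₀/2) * (n:ℝ)) * (n:ℝ)^(h-3) :=
              mul_le_mul_of_nonneg_right hc2 (by positivity)
          _ = (c₀/2) * (n:ℝ)^(h-2) := by rw [hpow]; ring
      have hCfg : ((CfgF p).card : ℝ) = (((Finset.univ.filter fun g : Fin h → Fin n =>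
          g x = p.1 ∧ g y = p.2 ∧ Function.Injective g ∧
            ∀ u v, H.Adj u v → G.Adj (g u) (g v))).card : ℝ) := by
        rw [hCfgFdef]
      rw [hCfg]
      linarith [hbase, hsmall]
    have hsumR : (Dord.card : ℝ) * ((c₀/2) * (n:ℝ)^(h-2)) ≤ ((Dord.biUnion CfgF).card : ℝ) := by
      have h2 := Finset.card_nsmul_le_sum Dord (fun p => ((CfgF p).card : ℝ))
        ((c₀/2) * (n:ℝ)^(h-2)) hper
      rw [nsmul_eq_mul] at h2
      have h1 : ((∑ p ∈ Dord, (CfgF p).card : ℕ) : ℝ) = ∑ p ∈ Dord, ((CfgF p).card : ℝ) := by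
        push_cast
        rfl
      rw [← hcardsum, h1]
      exact h2
    have hHomsR : ((Dord.biUnion CfgF).card : ℝ) ≤ (Homs.card : ℝ) := by
      exact_mod_cast Finset.card_le_card hsubH
    have hccR : (Homs.card : ℝ) ≤ (_root_.copyCount H G : ℝ) := by
      have hmap : ∀ g : {g // g ∈ Homs}, Function.Injective (g.1) ∧
          ∀ u v, H.Adj u v → G.Adj (g.1 u) (g.1 v) := by
        intro g
        have hmem : (g : Fin h → Fin n) ∈ Finset.univ.filter (fun g : Fin h → Fin n =>
            Function.Injective g ∧ ∀ u v, H.Adj u v → G.Adj (g u) (g v)) := g.2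
        exact (Finset.mem_filter.mp hmem).2
      have h1 : Homs.card ≤ _root_.copyCount H G := by
        have h2 := Nat.card_le_card_of_injective
          (f := fun g : {g // g ∈ Homs} =>
            (⟨⟨g.1, fun {u v} huv => (hmap g).2 u v huv⟩, (hmap g).1⟩ :
              {φ : H →g G // Function.Injective ⇑φ}))
          (by
            intro g1 g2 he
            apply Subtype.ext
            exact congrArg (fun q => ((q.1 : H →g G) : Fin h → Fin n)) he)
        simpa [_root_.copyCount, Nat.card_eq_finsetCard] using h2
      exact_mod_cast h1
    have hεn2 : ε * (n:ℝ)^2 ≤ (Dord.card : ℝ) := le_trans hm (by exact_mod_cast hDm)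
    have hNh : (n:ℝ)^h = (n:ℝ)^2 * (n:ℝ)^(h-2) := by
      rw [← pow_add]
      congr 1
      omega
    have hc₀half : (0:ℝ) ≤ (c₀/2) * (n:ℝ)^(h-2) := by
      have := le_of_lt hc₀pos
      positivity
    calc μ * ε * (n:ℝ)^h ≤ (c₀/2) * ε * (n:ℝ)^h := by
          apply mul_le_mul_of_nonneg_right
            (mul_le_mul_of_nonneg_right (min_le_left _ _) (le_of_lt hε)) (by positivity)
      _ = (ε * (n:ℝ)^2) * ((c₀/2) * (n:ℝ)^(h-2)) := by rw [hNh]; ring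
      _ ≤ (Dord.card : ℝ) * ((c₀/2) * (n:ℝ)^(h-2)) :=
          mul_le_mul_of_nonneg_right hεn2 hc₀half
      _ ≤ ((Dord.biUnion CfgF).card : ℝ) := hsumR
      _ ≤ (Homs.card : ℝ) := hHomsR
      _ ≤ (_root_.copyCount H G : ℝ) := hccR
  · -- small n
    push_neg at hbig
    have hNle : (n:ℝ) ≤ n₀ := le_of_lt hbig
    have hN0 : (0:ℝ) ≤ (n:ℝ) := Nat.cast_nonneg n
    have h1 : μ * (n:ℝ)^(h-2) ≤ 1 := by
      have h2 : (n:ℝ)^(h-2) ≤ n₀^(h-2) := pow_le_pow_left₀ hN0 hNle _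
      have h3 : n₀^(h-2) ≤ n₀^h := pow_le_pow_right₀ hn₀1 (by omega)
      have h5 : (0:ℝ) < n₀^h := by positivity
      calc μ * (n:ℝ)^(h-2) ≤ (1/n₀^h) * n₀^h := by
            apply mul_le_mul (min_le_right _ _) (le_trans h2 h3) (by positivity) (by positivity)
        _ = 1 := by field_simp
    have hNh : (n:ℝ)^h = (n:ℝ)^2 * (n:ℝ)^(h-2) := by
      rw [← pow_add]
      congr 1
      omega
    have hchain : μ * ε * (n:ℝ)^h ≤ (m:ℝ) := by
      calc μ * ε * (n:ℝ)^h = (ε * (n:ℝ)^2) * (μ * (n:ℝ)^(h-2)) := by rw [hNh]; ring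
        _ ≤ (ε * (n:ℝ)^2) * 1 := by
            apply mul_le_mul_of_nonneg_left h1
              (mul_nonneg (le_of_lt hε) (by positivity))
        _ = ε * (n:ℝ)^2 := mul_one _
        _ ≤ (m:ℝ) := hm
    exact le_trans hchain (by exact_mod_cast hmcc)
end

section
/- Let k ≥ 2 be an integer and let G be an n-vertex graph with minimum degree δ(G) > (2/(2k+1))·n that contains no odd cycle of length less than 2k+1 (i.e., its odd girth is at least 2k+1). Then G is bipartite. -/
open SimpleGraph

namespace AES13

variable {V : Type} {G : SimpleGraph V}

lemma walk_split {u v : V} (w : G.Walk u v) :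
    ∀ i, i ≤ w.length →
    ∃ (w1 : G.Walk u (w.getVert i)) (w2 : G.Walk (w.getVert i) v),
      w1.length = i ∧ w2.length = w.length - i ∧ ∀ t, w2.getVert t = w.getVert (i + t) := by
  induction w with
  | nil =>
    intro i hi
    simp only [Walk.length_nil, Nat.le_zero] at hi
    subst hi
    exact ⟨(Walk.nil).copy rfl (Walk.getVert_zero _).symm,
      (Walk.nil).copy (Walk.getVert_zero _).symm rfl, by simp, by simp, fun t => by simp⟩
  | @cons a b c h q ih =>
    intro i hi
    match i with
    | 0 =>
      exact ⟨(Walk.nil).copy rfl (Walk.getVert_zero _).symm,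
        (Walk.cons h q).copy (Walk.getVert_zero _).symm rfl, by simp, by simp, fun t => by simp⟩
    | (t + 1) =>
      have ht : t ≤ q.length := by simp [Walk.length_cons] at hi; omega
      obtain ⟨w1, w2, l1, l2, hgv⟩ := ih t ht
      refine ⟨(Walk.cons h w1).copy rfl (Walk.getVert_cons_succ q h).symm,
        w2.copy (Walk.getVert_cons_succ q h).symm rfl, by simp [l1], by simp [l2], ?_⟩
      intro s
      simp only [Walk.getVert_copy, hgv s]
      rw [show t + 1 + s = (t + s) + 1 by omega, Walk.getVert_cons_succ]

lemma colorable_two_of_even_closed_walks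
    (hE : ∀ (x : V) (p : G.Walk x x), Even p.length) : G.Colorable 2 := by
  classical
  have hpar : ∀ (a b : V) (p q : G.Walk a b), (Even p.length ↔ Even q.length) := by
    intro a b p q
    have h := hE a (p.append q.reverse)
    rw [Walk.length_append, Walk.length_reverse] at h
    exact Nat.even_add.mp h
  have hreach : ∀ v : V, G.Reachable ((G.connectedComponentMk v).out) v :=
    fun v => ConnectedComponent.exact (Quot.out_eq _)
  refine ⟨Coloring.mk
    (fun v => if ∃ p : G.Walk ((G.connectedComponentMk v).out) v, Odd p.length then 1 else 0) ?_⟩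
  intro a b hab
  have hcomp : G.connectedComponentMk a = G.connectedComponentMk b :=
    ConnectedComponent.sound hab.reachable
  have hout : (G.connectedComponentMk a).out = (G.connectedComponentMk b).out := by rw [hcomp]
  beta_reduce
  rw [hout]
  have hra : G.Reachable ((G.connectedComponentMk b).out) a := by
    rw [← hout]; exact hreach a
  have key : (∃ p : G.Walk ((G.connectedComponentMk b).out) a, Odd p.length) ↔
      ¬ (∃ p : G.Walk ((G.connectedComponentMk b).out) b, Odd p.length) := by
    constructor
    · rintro ⟨p, hp⟩ ⟨q, hq⟩
      have h2 := (hpar _ b (p.concat hab) q).mp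
        (by rw [Walk.length_concat]; exact Odd.add_one hp)
      exact (Nat.not_even_iff_odd.mpr hq) h2
    · intro hne
      obtain ⟨p⟩ := hra
      by_cases hp : Odd p.length
      · exact ⟨p, hp⟩
      · exact absurd ⟨p.concat hab, by
          rw [Walk.length_concat]; exact Even.add_one (Nat.not_odd_iff_even.mp hp)⟩ hne
  by_cases hP : ∃ p : G.Walk ((G.connectedComponentMk b).out) a, Odd p.length
  · simp [hP, key.mp hP]
  · have hQ : ∃ p : G.Walk ((G.connectedComponentMk b).out) b, Odd p.length := by
      by_contra hQ
      exact hP (key.mpr hQ)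
    simp [hP, hQ]

end AES13

theorem stmt_13 (k : ℕ) (hk : 2 ≤ k) (n : ℕ) (G : SimpleGraph (Fin n))
    (hδ : ∀ v, (2 / (2 * (k : ℝ) + 1)) * n < (Nat.card (G.neighborSet v) : ℝ))
    (hog : ∀ m : ℕ, 3 ≤ m → Odd m → m < 2 * k + 1 → ¬ HasCopy (cycleGraph m) G) :
    G.Colorable 2 := by
  classical
  apply AES13.colorable_two_of_even_closed_walks
  intro x p
  by_contra hodd
  rw [Nat.not_even_iff_odd] at hodd
  have hP : ∃ m, Odd m ∧ ∃ (y : Fin n) (q : G.Walk y y), q.length = m :=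
    ⟨p.length, hodd, x, p, rfl⟩
  set ℓ := Nat.find hP with hldef
  obtain ⟨hlodd, v0, w, hw⟩ := Nat.find_spec hP
  rw [← hldef] at hlodd hw
  have hmin : ∀ m, Odd m → ∀ (y : Fin n) (q : G.Walk y y), q.length = m → ℓ ≤ m :=
    fun m hm y q hq => Nat.find_le ⟨hm, y, q, hq⟩
  have hl2 : ℓ % 2 = 1 := Nat.odd_iff.mp hlodd
  -- segment walks
  have hseg : ∀ i j, i ≤ j → j ≤ ℓ →
      ∃ s : G.Walk (w.getVert i) (w.getVert j), s.length = j - i := by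
    intro i j hij hj
    obtain ⟨w1, w2, l1, l2, hgv⟩ := AES13.walk_split w i (by omega)
    obtain ⟨s1, s2, m1, m2, hgv2⟩ := AES13.walk_split w2 (j - i) (by omega)
    have he : w2.getVert (j - i) = w.getVert j := by rw [hgv]; congr 1; omega
    exact ⟨s1.copy rfl he, by rw [Walk.length_copy]; exact m1⟩
  have hseg' : ∀ i j, i ≤ j → j ≤ ℓ →
      ∃ s : G.Walk (w.getVert j) (w.getVert i), s.length = (ℓ - j) + i := by
    intro i j hij hj
    obtain ⟨w1, w2, l1, l2, hgv⟩ := AES13.walk_split w j (by omega)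
    obtain ⟨u1, u2, p1, p2, hgv2⟩ := AES13.walk_split w i (by omega)
    refine ⟨w2.append u1, ?_⟩
    rw [Walk.length_append, l2, p1, hw]
  have hl1 : ℓ ≠ 1 := by
    intro h1
    have hadj := w.adj_getVert_succ (i := 0) (by omega)
    rw [Walk.getVert_zero, show (0+1 : ℕ) = w.length by omega, Walk.getVert_length] at hadj
    exact G.irrefl hadj
  have hl3 : 3 ≤ ℓ := by
    have : 1 ≤ ℓ := by omega
    omega
  -- Step A : ℓ ≥ 2k+1
  have hA : 2 * k + 1 ≤ ℓ := by
    by_contra hlt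
    push_neg at hlt
    have hinj : ∀ i j, i < j → j < ℓ → w.getVert i ≠ w.getVert j := by
      intro i j hij hj heq
      rcases Nat.even_or_odd (j - i) with he | ho
      · rw [Nat.even_iff] at he
        obtain ⟨s', hs'⟩ := hseg' i j hij.le (by omega)
        have := hmin ((ℓ - j) + i) (Nat.odd_iff.mpr (by omega)) _ (s'.copy rfl heq)
          (by rw [Walk.length_copy]; exact hs')
        omega
      · rw [Nat.odd_iff] at ho
        obtain ⟨s, hs⟩ := hseg i j hij.le (by omega)
        have := hmin (j - i) (Nat.odd_iff.mpr (by omega)) _ (s.copy heq rfl)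
          (by rw [Walk.length_copy]; exact hs)
        omega
    obtain ⟨m, hm⟩ : ∃ m, ℓ = m + 2 := ⟨ℓ - 2, by omega⟩
    have hkey : ∀ c d : Fin (m + 2), d - c = 1 → G.Adj (w.getVert c.val) (w.getVert d.val) := by
      intro c d hdc
      have hd : d = c + 1 := by
        have := sub_eq_iff_eq_add.mp hdc
        rw [this]; exact add_comm _ _
      subst hd
      rcases eq_or_ne c (Fin.last (m + 1)) with hc | hc
      · have hadj := w.adj_getVert_succ (i := m + 1) (by omega)
        rw [show m + 1 + 1 = w.length by omega, Walk.getVert_length] at hadj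
        rw [Fin.val_add_one, if_pos hc, hc]
        simpa using hadj
      · rw [Fin.val_add_one, if_neg hc]
        exact w.adj_getVert_succ (by
          have : c.val < m + 1 := Fin.val_lt_last hc
          omega)
    let f : cycleGraph (m + 2) →g G :=
      { toFun := fun a => w.getVert a.val
        map_rel' := by
          intro a b hab
          rw [cycleGraph_adj] at hab
          rcases hab with h | h
          · exact (hkey b a h).symm
          · exact hkey a b h }
    have hfinj : Function.Injective f := by
      intro a b heq
      rcases lt_trichotomy a.val b.val with h | h | h
      · exact absurd heq (hinj a.val b.val h (by omega))
      · exact Fin.ext h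
      · exact absurd heq.symm (hinj b.val a.val h (by omega))
    exact hog (m + 2) (by omega) (hm ▸ hlodd) (by omega) ⟨f, hfinj⟩
  -- Step B : each vertex has at most 2 neighbors among walk positions
  have hpairlem : ∀ (u : Fin n) i j, i < j → j < ℓ →
      G.Adj u (w.getVert i) → G.Adj u (w.getVert j) → (j - i = 2 ∨ j - i = ℓ - 2) := by
    intro u i j hij hj hui huj
    rcases Nat.even_or_odd (j - i) with he | ho
    · rw [Nat.even_iff] at he
      obtain ⟨s', hs'⟩ := hseg' i j hij.le (by omega)
      have hlen : (Walk.cons huj (s'.concat hui.symm)).length = (ℓ - j) + i + 2 := by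
        rw [Walk.length_cons, Walk.length_concat, hs']
      have := hmin ((ℓ - j) + i + 2) (Nat.odd_iff.mpr (by omega)) u _ hlen
      omega
    · rw [Nat.odd_iff] at ho
      obtain ⟨s, hs⟩ := hseg i j hij.le (by omega)
      have hlen : (Walk.cons hui (s.concat huj.symm)).length = (j - i) + 2 := by
        rw [Walk.length_cons, Walk.length_concat, hs]
      have := hmin ((j - i) + 2) (Nat.odd_iff.mpr (by omega)) u _ hlen
      omega
  have hcard : ∀ u : Fin n,
      ((Finset.range ℓ).filter (fun i => G.Adj u (w.getVert i))).card ≤ 2 := by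
    intro u
    by_contra hc
    push_neg at hc
    obtain ⟨a, b, c, ha, hb, hcm, hab, hac, hbc⟩ := Finset.two_lt_card_iff.mp hc
    simp only [Finset.mem_filter, Finset.mem_range] at ha hb hcm
    have p1 := fun h => hpairlem u a b h hb.1 ha.2 hb.2
    have p2 := fun h => hpairlem u b a h ha.1 hb.2 ha.2
    have p3 := fun h => hpairlem u a c h hcm.1 ha.2 hcm.2
    have p4 := fun h => hpairlem u c a h ha.1 hcm.2 ha.2
    have p5 := fun h => hpairlem u b c h hcm.1 hb.2 hcm.2
    have p6 := fun h => hpairlem u c b h hb.1 hcm.2 hb.2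
    omega
  -- Counting
  have hD : ∀ y : Fin n, (Nat.card (G.neighborSet y)) =
      (Finset.univ.filter (fun u => G.Adj y u)).card := by
    intro y
    rw [Nat.card_eq_fintype_card, ← Set.toFinset_card]
    congr 1
    ext u
    simp [neighborSet]
    exact Set.mem_toFinset
  have hsum : ∑ i ∈ Finset.range ℓ, (Finset.univ.filter (fun u => G.Adj (w.getVert i) u)).card
      = ∑ u : Fin n, ((Finset.range ℓ).filter (fun i => G.Adj u (w.getVert i))).card := by
    simp only [Finset.card_filter]
    rw [Finset.sum_comm]
    refine Finset.sum_congr rfl fun u _ => Finset.sum_congr rfl fun i _ => ?_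
    rw [G.adj_comm]
  have hub : ∑ i ∈ Finset.range ℓ, (Finset.univ.filter (fun u => G.Adj (w.getVert i) u)).card
      ≤ 2 * n := by
    rw [hsum]
    calc ∑ u : Fin n, ((Finset.range ℓ).filter (fun i => G.Adj u (w.getVert i))).card
        ≤ ∑ _u : Fin n, 2 := Finset.sum_le_sum (fun u _ => hcard u)
      _ = 2 * n := by simp [Finset.sum_const, mul_comm]
  have hlow : ∀ i ∈ Finset.range ℓ, (2 / (2 * (k : ℝ) + 1)) * n
      < ((Finset.univ.filter (fun u => G.Adj (w.getVert i) u)).card : ℝ) := by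
    intro i _
    have := hδ (w.getVert i)
    rwa [hD] at this
  have hk0 : (0 : ℝ) < 2 * (k : ℝ) + 1 := by positivity
  have hc0 : (0 : ℝ) ≤ (2 / (2 * (k : ℝ) + 1)) * n := by positivity
  have h1 : (ℓ : ℝ) * ((2 / (2 * (k : ℝ) + 1)) * n)
      < ((∑ i ∈ Finset.range ℓ, (Finset.univ.filter (fun u => G.Adj (w.getVert i) u)).card : ℕ) : ℝ) := by
    push_cast
    calc (ℓ : ℝ) * ((2 / (2 * (k : ℝ) + 1)) * n)
        = ∑ _i ∈ Finset.range ℓ, ((2 / (2 * (k : ℝ) + 1)) * n) := by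
          rw [Finset.sum_const, Finset.card_range, nsmul_eq_mul]
      _ < _ := Finset.sum_lt_sum_of_nonempty ⟨0, Finset.mem_range.mpr (by omega)⟩ hlow
  have h2 : ((∑ i ∈ Finset.range ℓ, (Finset.univ.filter (fun u => G.Adj (w.getVert i) u)).card : ℕ) : ℝ)
      ≤ 2 * n := by exact_mod_cast hub
  have h3 : (2 * (k : ℝ) + 1) ≤ (ℓ : ℝ) := by exact_mod_cast hA
  have heq : (2 * (k : ℝ) + 1) * ((2 / (2 * (k : ℝ) + 1)) * n) = 2 * n := by
    field_simp
  nlinarith [mul_le_mul_of_nonneg_right h3 hc0]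
end

section
/- Let α > 0, let n be a positive integer, and let G be an n-vertex graph whose vertex set is partitioned into nonempty sets V₁, V₂, …, V₇ such that every edge of G joins V_i and V_{i+1} for some i ∈ {1,…,7} (indices modulo 7). Suppose the minimum degree satisfies δ(G) ≥ (1/4 + α/2)n. Then: (a) for every i ∈ {1,…,7}, any two vertices u, v that both lie in V_i, or that satisfy u ∈ V_i and v ∈ V_{i+2}, have at least αn common neighbors in G; and (b) for every i ∈ {1,…,7}, every vertex of V_i has at least αn neighbors in V_{i−1} and at least αn neighbors in V_{i+1}. -/
open SimpleGraph

theorem stmt_19 (α : ℝ) (hα : 0 < α) (n : ℕ) (hn : 0 < n) (G : SimpleGraph (Fin n))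
    (Vp : Fin 7 → Set (Fin n))
    (hne : ∀ i, (Vp i).Nonempty)
    (hdisj : Pairwise fun i j => Disjoint (Vp i) (Vp j))
    (hcover : (⋃ i, Vp i) = Set.univ)
    (hedges : ∀ u v : Fin n, G.Adj u v →
      ∃ i : Fin 7, (u ∈ Vp i ∧ v ∈ Vp (i + 1)) ∨ (v ∈ Vp i ∧ u ∈ Vp (i + 1)))
    (hδ : ∀ v, (1 / 4 + α / 2) * n ≤ (Nat.card (G.neighborSet v) : ℝ)) :
    (∀ i : Fin 7, ∀ u v : Fin n, u ≠ v →
      ((u ∈ Vp i ∧ v ∈ Vp i) ∨ (u ∈ Vp i ∧ v ∈ Vp (i + 2))) →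
      α * n ≤ (Nat.card ↥(G.neighborSet u ∩ G.neighborSet v) : ℝ)) ∧
    (∀ i : Fin 7, ∀ v ∈ Vp i,
      α * n ≤ (Nat.card ↥(G.neighborSet v ∩ Vp (i - 1)) : ℝ) ∧
      α * n ≤ (Nat.card ↥(G.neighborSet v ∩ Vp (i + 1)) : ℝ)) := by
  classical
  simp only [Nat.card_coe_set_eq] at hδ ⊢
  set a : Fin 7 → ℝ := fun j => ((Vp j).ncard : ℝ) with ha
  -- membership determines the part uniquely
  have hmem : ∀ {x : Fin n} {i j : Fin 7}, x ∈ Vp i → x ∈ Vp j → i = j := by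
    intro x i j hi hj
    by_contra hij
    exact Set.disjoint_left.mp (hdisj hij) hi hj
  -- neighbors lie in the two adjacent parts
  have hNsub : ∀ (j : Fin 7) (v : Fin n), v ∈ Vp j →
      G.neighborSet v ⊆ Vp (j - 1) ∪ Vp (j + 1) := by
    intro j v hv w hw
    obtain ⟨i, hcase⟩ := hedges v w hw
    rcases hcase with ⟨hvi, hwi⟩ | ⟨hwi, hvi⟩
    · right; rwa [hmem hvi hv] at hwi
    · left
      have : i + 1 = j := hmem hvi hv
      have : i = j - 1 := by rw [← this, add_sub_cancel_right]
      rwa [this] at hwi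
  -- sum of part sizes is n
  have hsumN : ∑ j : Fin 7, (Vp j).ncard = n := by
    have hU : (Finset.univ : Finset (Fin 7)).biUnion (fun j => (Vp j).toFinset)
        = Finset.univ := by
      ext x
      simp only [Finset.mem_biUnion, Finset.mem_univ, Set.mem_toFinset, true_and, iff_true]
      have : x ∈ ⋃ i, Vp i := by rw [hcover]; trivial
      exact Set.mem_iUnion.mp this
    have hc := Finset.card_biUnion (s := (Finset.univ : Finset (Fin 7)))
      (t := fun j => (Vp j).toFinset) ?_
    · rw [hU] at hc
      simp only [Finset.card_univ, Fintype.card_fin] at hc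
      exact (Finset.sum_congr rfl fun j _ => Set.ncard_eq_toFinset_card' _).trans hc.symm
    · intro i _ j _ hij
      exact Set.disjoint_toFinset.mpr (hdisj hij)
  have hsum7 : ∀ j : Fin 7,
      a j + a (j+1) + a (j+2) + a (j+3) + a (j+4) + a (j+5) + a (j+6) = n := by
    intro j
    have he : ∑ k : Fin 7, a (j + k) = ∑ k : Fin 7, a k :=
      Fintype.sum_equiv (Equiv.addLeft j) _ _ (fun k => rfl)
    have hr : (∑ k : Fin 7, a k) = n := by
      rw [ha]; push_cast [← hsumN]; rfl
    rw [hr] at he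
    rw [Fin.sum_univ_seven] at he
    simpa [add_zero] using he
  have hann : ∀ j : Fin 7, (0:ℝ) ≤ a j := fun j => Nat.cast_nonneg _
  -- pair bound
  have hpair : ∀ j : Fin 7, (1/4 + α/2) * n ≤ a (j - 1) + a (j + 1) := by
    intro j
    obtain ⟨v, hv⟩ := hne j
    have h1 : (G.neighborSet v).ncard ≤ (Vp (j-1) ∪ Vp (j+1)).ncard :=
      Set.ncard_le_ncard (hNsub j v hv) (Set.toFinite _)
    have h2 : (Vp (j-1) ∪ Vp (j+1)).ncard ≤ (Vp (j-1)).ncard + (Vp (j+1)).ncard :=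
      Set.ncard_union_le _ _
    have := hδ v
    have h1' : ((G.neighborSet v).ncard : ℝ) ≤ ((Vp (j-1)).ncard : ℝ) + (Vp (j+1)).ncard := by
      exact_mod_cast le_trans h1 h2
    simp only [ha]
    linarith
  -- index identities
  have e1 : ∀ j : Fin 7, j - 1 = j + 6 := by decide
  have e2 : ∀ j : Fin 7, (j+1) - 1 = j ∧ (j+1)+1 = j+2 := by decide
  have e3 : ∀ j : Fin 7, (j+3) - 1 = j+2 ∧ (j+3)+1 = j+4 := by decide
  have e4 : ∀ j : Fin 7, (j+4) - 1 = j+3 ∧ (j+4)+1 = j+5 := by decide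
  have e6 : ∀ j : Fin 7, (j+6) - 1 = j+5 ∧ (j+6)+1 = j := by decide
  -- every part is small
  have hsmall : ∀ j : Fin 7, a j ≤ n - 3 * ((1/4 + α/2) * n) := by
    intro j
    have p0 := hpair j; rw [e1 j] at p0
    have p3 := hpair (j+3); rw [(e3 j).1, (e3 j).2] at p3
    have p4 := hpair (j+4); rw [(e4 j).1, (e4 j).2] at p4
    have := hsum7 j
    linarith
  refine ⟨?_, ?_⟩
  · -- part (a)
    intro i u v huv hcase
    have p3 := hpair (i+3); rw [(e3 i).1, (e3 i).2] at p3
    have p6 := hpair (i+6); rw [(e6 i).1, (e6 i).2] at p6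
    have p4 := hpair (i+4); rw [(e4 i).1, (e4 i).2] at p4
    have hsum := hsum7 i
    have hIE := Set.ncard_inter_add_ncard_union (G.neighborSet u) (G.neighborSet v)
      (Set.toFinite _) (Set.toFinite _)
    have hIE' : ((G.neighborSet u ∩ G.neighborSet v).ncard : ℝ)
        + ((G.neighborSet u ∪ G.neighborSet v).ncard : ℝ)
        = ((G.neighborSet u).ncard : ℝ) + (G.neighborSet v).ncard := by exact_mod_cast hIE
    have hdu := hδ u; have hdv := hδ v
    rcases hcase with ⟨hu, hv⟩ | ⟨hu, hv⟩
    · -- both in Vp i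
      have hsub : G.neighborSet u ∪ G.neighborSet v ⊆ Vp (i-1) ∪ Vp (i+1) :=
        Set.union_subset (hNsub i u hu) (hNsub i v hv)
      have hU : ((G.neighborSet u ∪ G.neighborSet v).ncard : ℝ)
          ≤ a (i-1) + a (i+1) := by
        have h1 := Set.ncard_le_ncard hsub (Set.toFinite _)
        have h2 := Set.ncard_union_le (Vp (i-1)) (Vp (i+1))
        simp only [ha]
        exact_mod_cast le_trans h1 h2
      rw [e1 i] at hU
      have := hann i
      linarith
    · -- u ∈ Vp i, v ∈ Vp (i+2)
      have hsubv := hNsub (i+2) v hv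
      rw [(show (i+2) - 1 = i+1 by rw [show (i:Fin 7)+2 = (i+1)+1 by rw [add_assoc]; rfl, (e2 (i+1)).1]),
        (show (i:Fin 7)+2+1 = i+3 by rw [add_assoc]; rfl)] at hsubv
      have hsub : G.neighborSet u ∪ G.neighborSet v
          ⊆ Vp (i-1) ∪ Vp (i+1) ∪ Vp (i+3) := by
        refine Set.union_subset ?_ ?_
        · exact (hNsub i u hu).trans (Set.subset_union_left)
        · exact hsubv.trans (by
            intro x hx
            rcases hx with hx | hx
            · exact Or.inl (Or.inr hx)
            · exact Or.inr hx)
      have hU : ((G.neighborSet u ∪ G.neighborSet v).ncard : ℝ)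
          ≤ a (i-1) + a (i+1) + a (i+3) := by
        have h1 := Set.ncard_le_ncard hsub (Set.toFinite _)
        have h2 := (Set.ncard_union_le (Vp (i-1) ∪ Vp (i+1)) (Vp (i+3))).trans
          (by exact Nat.add_le_add_right (Set.ncard_union_le _ _) _)
        simp only [ha]
        exact_mod_cast le_trans h1 h2
      rw [e1 i] at hU
      have := hann i
      linarith
  · -- part (b)
    intro i v hv
    have hsub := hNsub i v hv
    have hsplit : ((G.neighborSet v).ncard : ℝ)
        ≤ ((G.neighborSet v ∩ Vp (i-1)).ncard : ℝ)
          + ((G.neighborSet v ∩ Vp (i+1)).ncard : ℝ) := by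
      have : G.neighborSet v
          = (G.neighborSet v ∩ Vp (i-1)) ∪ (G.neighborSet v ∩ Vp (i+1)) := by
        rw [← Set.inter_union_distrib_left, Set.inter_eq_left.mpr hsub]
      calc ((G.neighborSet v).ncard : ℝ)
          = (((G.neighborSet v ∩ Vp (i-1)) ∪ (G.neighborSet v ∩ Vp (i+1))).ncard : ℝ) := by
            rw [← this]
        _ ≤ _ := by exact_mod_cast Set.ncard_union_le _ _
    have hA : ((G.neighborSet v ∩ Vp (i-1)).ncard : ℝ) ≤ a (i-1) := by
      simp only [ha]
      exact_mod_cast Set.ncard_le_ncard Set.inter_subset_right (Set.toFinite _)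
    have hB : ((G.neighborSet v ∩ Vp (i+1)).ncard : ℝ) ≤ a (i+1) := by
      simp only [ha]
      exact_mod_cast Set.ncard_le_ncard Set.inter_subset_right (Set.toFinite _)
    have hs1 := hsmall (i-1)
    have hs2 := hsmall (i+1)
    have hd := hδ v
    constructor
    · linarith
    · linarith
end
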